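/- arXiv:1411.4573 — 4 statements merged into one kernel-verified Lean document; each statement's English description precedes it below -/
import Mathlib

section
/- Let D = (U ∪ {r}, A) be a digraph with nonnegative integer edge weights {w_e}, where r ∉ U is a root node, such that the weighted in-degree of every node u ∈ U is at least its weighted out-degree (∑_{e entering u} w_e ≥ ∑_{e leaving u} w_e). Then for any integer K ≥ 0 there exist finitely many out-arborescences F_1, …, F_q rooted at r (each a subgraph of D in which every node is reachable from r by a directed path) and positive integer weights γ_1, …, γ_q such that ∑_{i=1}^q γ_i = K, ∑_{i : e ∈ F_i} γ_i ≤ w_e for every edge e ∈ A, and ∑_{i : u ∈ F_i} γ_i ≥ min{K, λ_D(r,u)} for every node u ∈ U. -/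
open Finset

/-- Total weight of arcs leaving the set `X` (a directed cut). -/
def cutWeight {V : Type*} [Fintype V] [DecidableEq V] (w : V → V → ℕ) (X : Finset V) : ℕ :=
  ∑ p ∈ X, ∑ q ∈ Xᶜ, w p q

/-- `λ_D(x,y)`: the maximum number of edge-disjoint directed x→y paths in the multigraph
obtained by replacing each arc `e` by `w e` parallel copies; by Menger's theorem this equals
the minimum total weight of a directed x-y cut, which we take as the definition. -/
noncomputable def lambdaW {V : Type*} [Fintype V] [DecidableEq V]
    (w : V → V → ℕ) (x y : V) : ℕ :=
  sInf {m : ℕ | ∃ X : Finset V, x ∈ X ∧ y ∉ X ∧ cutWeight w X = m}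

/-- The node set of an arc set `F` together with the root `r`. -/
def arbVerts {V : Type*} [DecidableEq V] (r : V) (F : Finset (V × V)) : Finset V :=
  insert r (F.biUnion fun e => {e.1, e.2})

/-- `F` is an out-arborescence rooted at `r`: every node of `F` is reachable
from `r` by a directed path using arcs of `F`. -/
def IsArborescence {V : Type*} [DecidableEq V] (r : V) (F : Finset (V × V)) : Prop :=
  ∀ v ∈ arbVerts r F, Relation.ReflTransGen (fun a b => (a, b) ∈ F) r v

section Helpers
variable {V : Type*} [Fintype V] [DecidableEq V]

def dW (w : V → V → ℕ) (A B : Finset V) : ℕ := ∑ p ∈ A, ∑ q ∈ B, w p q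

def Eulerian (w : V → V → ℕ) : Prop := ∀ v : V, (∑ b : V, w v b) = (∑ a : V, w a v)

lemma dW_eq_indicator (w : V → V → ℕ) (A B : Finset V) :
    dW w A B = ∑ p : V, ∑ q : V, (if p ∈ A ∧ q ∈ B then w p q else 0) := by
  classical
  unfold dW
  rw [← Finset.sum_subset (Finset.subset_univ A)]
  · refine Finset.sum_congr rfl fun p hp => ?_
    rw [← Finset.sum_subset (Finset.subset_univ B)]
    · exact Finset.sum_congr rfl fun q hq => by simp [hp, hq]
    · intro q _ hq; simp [hq]
  · intro p _ hp
    exact Finset.sum_eq_zero fun q _ => by simp [hp]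

lemma cutWeight_eq_ind (w : V → V → ℕ) (X : Finset V) :
    cutWeight w X = ∑ p : V, ∑ q : V, (if p ∈ X ∧ q ∉ X then w p q else 0) := by
  have := dW_eq_indicator w X Xᶜ
  simp only [Finset.mem_compl] at this
  exact this

lemma cutWeight_univ (w : V → V → ℕ) : cutWeight w (univ : Finset V) = 0 := by
  simp [cutWeight]

/-- Submodularity with exact defect terms. -/
lemma cut_defect (w : V → V → ℕ) (X Y : Finset V) :
    cutWeight w X + cutWeight w Y =
      cutWeight w (X ∪ Y) + cutWeight w (X ∩ Y) +
        dW w (X \ Y) (Y \ X) + dW w (Y \ X) (X \ Y) := by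
  classical
  simp only [cutWeight_eq_ind, dW_eq_indicator, ← Finset.sum_add_distrib]
  refine Finset.sum_congr rfl fun p _ => Finset.sum_congr rfl fun q _ => ?_
  by_cases hpX : p ∈ X <;> by_cases hpY : p ∈ Y <;>
    by_cases hqX : q ∈ X <;> by_cases hqY : q ∈ Y <;>
    simp [hpX, hpY, hqX, hqY]

lemma sum_out_eq (w : V → V → ℕ) (X : Finset V) :
    ∑ v ∈ X, ∑ b : V, w v b = dW w X X + dW w X Xᶜ := by
  unfold dW
  rw [← Finset.sum_add_distrib]
  exact Finset.sum_congr rfl fun p _ => (Finset.sum_add_sum_compl X _).symm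

lemma sum_in_eq (w : V → V → ℕ) (X : Finset V) :
    ∑ v ∈ X, ∑ a : V, w a v = dW w X X + dW w Xᶜ X := by
  unfold dW
  have : ∀ v ∈ X, ∑ a : V, w a v = ∑ a ∈ X, w a v + ∑ a ∈ Xᶜ, w a v := fun v _ =>
    (Finset.sum_add_sum_compl X _).symm
  rw [Finset.sum_congr rfl this, Finset.sum_add_distrib, Finset.sum_comm (s := X) (t := X),
    Finset.sum_comm (s := X) (t := Xᶜ)]

lemma eulerian_cut_symm {w : V → V → ℕ} (hE : Eulerian w) (X : Finset V) :
    cutWeight w X = cutWeight w Xᶜ := by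
  have h1 : ∑ v ∈ X, ∑ b : V, w v b = ∑ v ∈ X, ∑ a : V, w a v :=
    Finset.sum_congr rfl fun v _ => hE v
  rw [sum_out_eq, sum_in_eq] at h1
  have h2 : dW w X Xᶜ = dW w Xᶜ X := by omega
  show dW w X Xᶜ = dW w Xᶜ Xᶜᶜ
  rw [compl_compl]; exact h2

lemma lambdaW_le (w : V → V → ℕ) (r : V) {v : V} {X : Finset V} (hx : r ∈ X) (hy : v ∉ X) :
    lambdaW w r v ≤ cutWeight w X :=
  Nat.sInf_le ⟨X, hx, hy, rfl⟩

lemma lambdaW_exists (w : V → V → ℕ) (r : V) {v : V} (hv : v ≠ r) :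
    ∃ X : Finset V, r ∈ X ∧ v ∉ X ∧ cutWeight w X = lambdaW w r v :=
  Nat.sInf_mem (⟨_, Finset.univ.erase v, Finset.mem_erase.2 ⟨(Ne.symm hv), Finset.mem_univ r⟩,
    fun h => (Finset.mem_erase.1 h).1 rfl, rfl⟩ :
    {m : ℕ | ∃ X : Finset V, r ∈ X ∧ v ∉ X ∧ cutWeight w X = m}.Nonempty)

lemma le_lambdaW (w : V → V → ℕ) (r : V) {v : V} {m : ℕ} (hv : v ≠ r)
    (h : ∀ X : Finset V, r ∈ X → v ∉ X → m ≤ cutWeight w X) : m ≤ lambdaW w r v := by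
  obtain ⟨X, h1, h2, h3⟩ := lambdaW_exists w r hv
  exact h3 ▸ h X h1 h2

lemma dW_single_le (w : V → V → ℕ) {a b : V} {A B : Finset V} (ha : a ∈ A) (hb : b ∈ B) :
    w a b ≤ dW w A B :=
  le_trans (Finset.single_le_sum (f := fun q => w a q) (fun _ _ => Nat.zero_le _) hb)
    (Finset.single_le_sum (f := fun p => ∑ q ∈ B, w p q) (fun _ _ => Nat.zero_le _) ha)

/-- the split weight function. -/
def splitW (w : V → V → ℕ) (u s y : V) : V → V → ℕ := fun a b =>
  if a = u ∧ b = s then w a b - 1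
  else if a = s ∧ b = y then w a b - 1
  else if a = u ∧ b = y then w a b + 1
  else w a b

lemma splitW_pointwise (w : V → V → ℕ) {u s y : V} (hus : u ≠ s) (hys : y ≠ s)
    (h1 : 1 ≤ w u s) (h2 : 1 ≤ w s y) (p q : V) :
    splitW w u s y p q + (if p = u ∧ q = s then 1 else 0) + (if p = s ∧ q = y then 1 else 0)
      = w p q + (if p = u ∧ q = y then 1 else 0) := by
  unfold splitW
  by_cases e1 : p = u ∧ q = s
  · have A : ¬(p = s ∧ q = y) := fun h => hus (e1.1.symm.trans h.1)
    have B : ¬(p = u ∧ q = y) := fun h => hys (h.2.symm.trans e1.2)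
    rw [if_pos e1, if_pos e1, if_neg A, if_neg B, e1.1, e1.2]
    omega
  · by_cases e2 : p = s ∧ q = y
    · have B : ¬(p = u ∧ q = y) := fun h => hus (h.1.symm.trans e2.1)
      rw [if_neg e1, if_neg e1, if_pos e2, if_pos e2, if_neg B, e2.1, e2.2]
      omega
    · by_cases e3 : p = u ∧ q = y
      · rw [if_neg e1, if_neg e1, if_neg e2, if_neg e2, if_pos e3, if_pos e3]
      · rw [if_neg e1, if_neg e1, if_neg e2, if_neg e2, if_neg e3, if_neg e3]

lemma sum_delta (a b : V) (g : V → V → ℕ) :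
    (∑ p : V, ∑ q : V, (if p = a ∧ q = b then g p q else 0)) = g a b := by
  classical
  rw [Finset.sum_eq_single a]
  · rw [Finset.sum_eq_single b]
    · simp
    · intro q _ hq; simp [hq]
    · intro h; exact absurd (Finset.mem_univ b) h
  · intro p _ hp
    exact Finset.sum_eq_zero fun q _ => by simp [hp]
  · intro h; exact absurd (Finset.mem_univ a) h

/-- key cut identity for splitting. -/
lemma splitW_cut (w : V → V → ℕ) {u s y : V} (hus : u ≠ s) (hys : y ≠ s)
    (h1 : 1 ≤ w u s) (h2 : 1 ≤ w s y) (X : Finset V) :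
    cutWeight (splitW w u s y) X + (if u ∈ X ∧ s ∉ X then 1 else 0)
      + (if s ∈ X ∧ y ∉ X then 1 else 0)
      = cutWeight w X + (if u ∈ X ∧ y ∉ X then 1 else 0) := by
  classical
  have key : ∀ a b : V,
      (∑ p : V, ∑ q : V, (if p ∈ X ∧ q ∉ X then (if p = a ∧ q = b then 1 else 0) else 0))
        = (if a ∈ X ∧ b ∉ X then 1 else 0) := by
    intro a b
    have : ∀ p q : V, (if p ∈ X ∧ q ∉ X then (if p = a ∧ q = b then 1 else 0) else 0)
        = (if p = a ∧ q = b then (if a ∈ X ∧ b ∉ X then 1 else 0) else 0) := by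
      intro p q
      by_cases h : p = a ∧ q = b
      · obtain ⟨rfl, rfl⟩ := h; simp
      · simp [h]
    rw [Finset.sum_congr rfl fun p _ => Finset.sum_congr rfl fun q _ => this p q]
    exact sum_delta a b _
  have expand : ∀ g : V → V → ℕ, cutWeight g X = ∑ p : V, ∑ q : V,
      (if p ∈ X ∧ q ∉ X then g p q else 0) := fun g => cutWeight_eq_ind g X
  rw [expand, expand, ← key u s, ← key s y, ← key u y]
  rw [← Finset.sum_add_distrib, ← Finset.sum_add_distrib, ← Finset.sum_add_distrib]
  refine Finset.sum_congr rfl fun p _ => ?_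
  rw [← Finset.sum_add_distrib, ← Finset.sum_add_distrib, ← Finset.sum_add_distrib]
  refine Finset.sum_congr rfl fun q _ => ?_
  by_cases h : p ∈ X ∧ q ∉ X
  · simp only [h, if_true]
    exact splitW_pointwise w hus hys h1 h2 p q
  · simp [h]

end Helpers

section Jackson
variable {V : Type*} [Fintype V] [DecidableEq V]
variable (w : V → V → ℕ) (r s u : V)

def SepCut (S : Finset V) (v : V) : Prop := (r ∈ S ∧ v ∉ S) ∨ (r ∉ S ∧ v ∈ S)

def Blk (T : Finset V) (v : V) : Prop :=
  s ∈ T ∧ u ∉ T ∧ v ≠ s ∧ SepCut r T v ∧ cutWeight w T = lambdaW w r v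

variable {w r s u}

lemma sep_le {w : V → V → ℕ} {r : V} (hE : Eulerian w) {S : Finset V} {v : V}
    (h : SepCut r S v) : lambdaW w r v ≤ cutWeight w S := by
  rcases h with ⟨h1, h2⟩ | ⟨h1, h2⟩
  · exact lambdaW_le w r h1 h2
  · rw [eulerian_cut_symm hE S]
    exact lambdaW_le w r (Finset.mem_compl.2 h1) (fun hc => (Finset.mem_compl.1 hc) h2)

/-- posimodularity with defect, via complementation. -/
lemma posimod {w : V → V → ℕ} (hE : Eulerian w) (T T' : Finset V) :
    cutWeight w T + cutWeight w T' =
      cutWeight w (T \ T') + cutWeight w (T' \ T) +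
        dW w (T ∪ T')ᶜ (T ∩ T') + dW w (T ∩ T') (T ∪ T')ᶜ := by
  have h := cut_defect w Tᶜ T'
  have e1 : Tᶜ ∪ T' = (T \ T')ᶜ := by
    ext x; simp only [Finset.mem_union, Finset.mem_compl, Finset.mem_sdiff]; tauto
  have e2 : Tᶜ ∩ T' = T' \ T := by
    ext x; simp only [Finset.mem_inter, Finset.mem_compl, Finset.mem_sdiff]; tauto
  have e3 : Tᶜ \ T' = (T ∪ T')ᶜ := by
    ext x; simp only [Finset.mem_sdiff, Finset.mem_compl, Finset.mem_union]; tauto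
  have e4 : T' \ Tᶜ = T ∩ T' := by
    ext x; simp only [Finset.mem_sdiff, Finset.mem_compl, Finset.mem_inter, not_not]; tauto
  rw [e1, e2, e3, e4, ← eulerian_cut_symm hE T, ← eulerian_cut_symm hE (T \ T')] at h
  linarith [h]

lemma posimod_contra {w : V → V → ℕ} {r s u : V} (hE : Eulerian w) (hws : 1 ≤ w u s)
    {T T' : Finset V} {x x' : V}
    (hsT : s ∈ T) (hsT' : s ∈ T') (huT : u ∉ T) (huT' : u ∉ T')
    (hx : SepCut r (T \ T') x) (hx' : SepCut r (T' \ T) x')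
    (hsum : cutWeight w T + cutWeight w T' = lambdaW w r x + lambdaW w r x') : False := by
  have h1 := sep_le hE hx
  have h2 := sep_le hE hx'
  have h3 := posimod hE T T'
  have h4 : w u s ≤ dW w (T ∪ T')ᶜ (T ∩ T') :=
    dW_single_le w (Finset.mem_compl.2 (by simp [huT, huT'])) (Finset.mem_inter.2 ⟨hsT, hsT'⟩)
  omega

lemma squeeze {w : V → V → ℕ} {r : V} (hE : Eulerian w) {T T' : Finset V} {x x' : V}
    (hx : SepCut r (T ∪ T') x) (hx' : SepCut r (T ∩ T') x')
    (hsum : cutWeight w T + cutWeight w T' = lambdaW w r x + lambdaW w r x') :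
    cutWeight w (T ∩ T') = lambdaW w r x' := by
  have h1 := sep_le hE hx
  have h2 := sep_le hE hx'
  have h3 := cut_defect w T T'
  omega
end Jackson
section Merge
variable {V : Type*} [Fintype V] [DecidableEq V]

lemma merge_blk {w : V → V → ℕ} {r s u : V} (hE : Eulerian w) (hws : 1 ≤ w u s)
    {T T' : Finset V} {v v' : V}
    (h : Blk w r s u T v) (h' : Blk w r s u T' v') :
    ∃ v'', Blk w r s u (T ∩ T') v'' := by
  obtain ⟨hsT, huT, hvs, hsep, hc⟩ := h
  obtain ⟨hsT', huT', hvs', hsep', hc'⟩ := h'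
  have hsum : cutWeight w T + cutWeight w T' = lambdaW w r v + lambdaW w r v' := by
    rw [hc, hc']
  have hsum' : cutWeight w T + cutWeight w T' = lambdaW w r v' + lambdaW w r v := by
    rw [hc, hc']; omega
  have hsI : s ∈ T ∩ T' := Finset.mem_inter.2 ⟨hsT, hsT'⟩
  have huI : u ∉ T ∩ T' := fun hm => huT (Finset.mem_inter.1 hm).1
  have mk : ∀ x : V, x ≠ s → SepCut r (T ∩ T') x → cutWeight w (T ∩ T') = lambdaW w r x →
      ∃ v'', Blk w r s u (T ∩ T') v'' := fun x a b c => ⟨x, hsI, huI, a, b, c⟩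
  rcases hsep with ⟨hrT, hvT⟩ | ⟨hrT, hvT⟩ <;> rcases hsep' with ⟨hrT', hvT'⟩ | ⟨hrT', hvT'⟩
  -- PP : r ∈ T, v ∉ T ; r ∈ T', v' ∉ T'
  · by_cases hA : v ∈ T'
    · by_cases hB : v' ∈ T
      · exact (posimod_contra hE hws hsT hsT' huT huT'
          (Or.inr ⟨fun hm => (Finset.mem_sdiff.1 hm).2 hrT', Finset.mem_sdiff.2 ⟨hB, hvT'⟩⟩)
          (Or.inr ⟨fun hm => (Finset.mem_sdiff.1 hm).2 hrT, Finset.mem_sdiff.2 ⟨hA, hvT⟩⟩)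
          hsum').elim
      · exact mk v hvs
          (Or.inl ⟨Finset.mem_inter.2 ⟨hrT, hrT'⟩, fun hm => hvT (Finset.mem_inter.1 hm).1⟩)
          (squeeze hE
            (Or.inl ⟨Finset.mem_union_left _ hrT,
              fun hm => (Finset.mem_union.1 hm).elim (fun h => hB h) (fun h => hvT' h)⟩)
            (Or.inl ⟨Finset.mem_inter.2 ⟨hrT, hrT'⟩, fun hm => hvT (Finset.mem_inter.1 hm).1⟩)
            hsum')
    · exact mk v' hvs'
        (Or.inl ⟨Finset.mem_inter.2 ⟨hrT, hrT'⟩, fun hm => hvT' (Finset.mem_inter.1 hm).2⟩)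
        (squeeze hE
          (Or.inl ⟨Finset.mem_union_left _ hrT,
            fun hm => (Finset.mem_union.1 hm).elim (fun h => hvT h) (fun h => hA h)⟩)
          (Or.inl ⟨Finset.mem_inter.2 ⟨hrT, hrT'⟩, fun hm => hvT' (Finset.mem_inter.1 hm).2⟩)
          hsum)
  -- PQ : r ∈ T, v ∉ T ; r ∉ T', v' ∈ T'
  · by_cases hA : v ∈ T'
    · by_cases hB : v' ∈ T
      · exact (posimod_contra hE hws hsT hsT' huT huT'
          (Or.inl ⟨Finset.mem_sdiff.2 ⟨hrT, hrT'⟩, fun hm => (Finset.mem_sdiff.1 hm).2 hvT'⟩)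
          (Or.inr ⟨fun hm => hrT' (Finset.mem_sdiff.1 hm).1, Finset.mem_sdiff.2 ⟨hA, hvT⟩⟩)
          hsum').elim
      · exact (posimod_contra hE hws hsT hsT' huT huT'
          (Or.inl ⟨Finset.mem_sdiff.2 ⟨hrT, hrT'⟩, fun hm => hvT (Finset.mem_sdiff.1 hm).1⟩)
          (Or.inr ⟨fun hm => hrT' (Finset.mem_sdiff.1 hm).1, Finset.mem_sdiff.2 ⟨hvT', hB⟩⟩)
          hsum).elim
    · by_cases hB : v' ∈ T
      · exact mk v' hvs'
          (Or.inr ⟨fun hm => hrT' (Finset.mem_inter.1 hm).2, Finset.mem_inter.2 ⟨hB, hvT'⟩⟩)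
          (squeeze hE
            (Or.inl ⟨Finset.mem_union_left _ hrT,
              fun hm => (Finset.mem_union.1 hm).elim (fun h => hvT h) (fun h => hA h)⟩)
            (Or.inr ⟨fun hm => hrT' (Finset.mem_inter.1 hm).2, Finset.mem_inter.2 ⟨hB, hvT'⟩⟩)
            hsum)
      · exact (posimod_contra hE hws hsT hsT' huT huT'
          (Or.inl ⟨Finset.mem_sdiff.2 ⟨hrT, hrT'⟩, fun hm => hvT (Finset.mem_sdiff.1 hm).1⟩)
          (Or.inr ⟨fun hm => hrT' (Finset.mem_sdiff.1 hm).1, Finset.mem_sdiff.2 ⟨hvT', hB⟩⟩)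
          hsum).elim
  -- QP : r ∉ T, v ∈ T ; r ∈ T', v' ∉ T'
  · by_cases hA : v ∈ T'
    · by_cases hB : v' ∈ T
      · exact (posimod_contra hE hws hsT hsT' huT huT'
          (Or.inr ⟨fun hm => hrT (Finset.mem_sdiff.1 hm).1, Finset.mem_sdiff.2 ⟨hB, hvT'⟩⟩)
          (Or.inl ⟨Finset.mem_sdiff.2 ⟨hrT', hrT⟩, fun hm => (Finset.mem_sdiff.1 hm).2 hvT⟩)
          hsum').elim
      · exact mk v hvs
          (Or.inr ⟨fun hm => hrT (Finset.mem_inter.1 hm).1, Finset.mem_inter.2 ⟨hvT, hA⟩⟩)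
          (squeeze hE
            (Or.inl ⟨Finset.mem_union_right _ hrT',
              fun hm => (Finset.mem_union.1 hm).elim (fun h => hB h) (fun h => hvT' h)⟩)
            (Or.inr ⟨fun hm => hrT (Finset.mem_inter.1 hm).1, Finset.mem_inter.2 ⟨hvT, hA⟩⟩)
            hsum')
    · exact (posimod_contra hE hws hsT hsT' huT huT'
        (Or.inr ⟨fun hm => hrT (Finset.mem_sdiff.1 hm).1, Finset.mem_sdiff.2 ⟨hvT, hA⟩⟩)
        (Or.inl ⟨Finset.mem_sdiff.2 ⟨hrT', hrT⟩, fun hm => hvT' (Finset.mem_sdiff.1 hm).1⟩)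
        hsum).elim
  -- QQ : r ∉ T, v ∈ T ; r ∉ T', v' ∈ T'
  · by_cases hB : v' ∈ T
    · exact mk v' hvs'
        (Or.inr ⟨fun hm => hrT (Finset.mem_inter.1 hm).1, Finset.mem_inter.2 ⟨hB, hvT'⟩⟩)
        (squeeze hE
          (Or.inr ⟨fun hm => (Finset.mem_union.1 hm).elim (fun h => hrT h) (fun h => hrT' h),
            Finset.mem_union_left _ hvT⟩)
          (Or.inr ⟨fun hm => hrT (Finset.mem_inter.1 hm).1, Finset.mem_inter.2 ⟨hB, hvT'⟩⟩)
          hsum)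
    · by_cases hA : v ∈ T'
      · exact mk v hvs
          (Or.inr ⟨fun hm => hrT (Finset.mem_inter.1 hm).1, Finset.mem_inter.2 ⟨hvT, hA⟩⟩)
          (squeeze hE
            (Or.inr ⟨fun hm => (Finset.mem_union.1 hm).elim (fun h => hrT h) (fun h => hrT' h),
              Finset.mem_union_right _ hvT'⟩)
            (Or.inr ⟨fun hm => hrT (Finset.mem_inter.1 hm).1, Finset.mem_inter.2 ⟨hvT, hA⟩⟩)
            hsum')
      · exact (posimod_contra hE hws hsT hsT' huT huT'
          (Or.inr ⟨fun hm => hrT (Finset.mem_sdiff.1 hm).1, Finset.mem_sdiff.2 ⟨hvT, hA⟩⟩)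
          (Or.inr ⟨fun hm => hrT' (Finset.mem_sdiff.1 hm).1, Finset.mem_sdiff.2 ⟨hvT', hB⟩⟩)
          hsum).elim
end Merge
section JacksonMain
variable {V : Type*} [Fintype V] [DecidableEq V]

/-- invalid split pair yields a blocker avoiding y. -/
lemma blocker_of_invalid {w : V → V → ℕ} {r s u y : V}
    (hE : Eulerian w) (hus : u ≠ s) (hys : y ≠ s) (hws : 1 ≤ w u s) (hwy : 1 ≤ w s y)
    {v : V} (hvr : v ≠ r) (hvs : v ≠ s)
    (hlt : lambdaW (splitW w u s y) r v < lambdaW w r v) :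
    ∃ T, Blk w r s u T v ∧ y ∉ T := by
  obtain ⟨X, hrX, hvX, hcX⟩ := lambdaW_exists (splitW w u s y) r hvr
  have hlam : lambdaW w r v ≤ cutWeight w X := lambdaW_le w r hrX hvX
  have key := splitW_cut w hus hys hws hwy X
  rw [hcX] at key
  by_cases A : u ∈ X ∧ s ∉ X
  · -- type 2 blocker : T = Xᶜ
    have hyX : y ∈ X := by
      by_contra hyX
      have hB : ¬(s ∈ X ∧ y ∉ X) := fun h => A.2 h.1
      rw [if_pos A, if_neg hB, if_pos ⟨A.1, hyX⟩] at key
      omega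
    have hC : ¬(u ∈ X ∧ y ∉ X) := fun h => h.2 hyX
    have hB : ¬(s ∈ X ∧ y ∉ X) := fun h => A.2 h.1
    rw [if_pos A, if_neg hB, if_neg hC] at key
    refine ⟨Xᶜ, ⟨Finset.mem_compl.2 A.2, fun h => (Finset.mem_compl.1 h) A.1, hvs,
      Or.inr ⟨fun h => (Finset.mem_compl.1 h) hrX, Finset.mem_compl.2 hvX⟩, ?_⟩,
      fun h => (Finset.mem_compl.1 h) hyX⟩
    rw [← eulerian_cut_symm hE X]
    omega
  · by_cases B : s ∈ X ∧ y ∉ X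
    · have hC : ¬(u ∈ X ∧ y ∉ X) := by
        intro hC
        rw [if_neg A, if_pos B, if_pos hC] at key
        omega
      have huX : u ∉ X := fun h => hC ⟨h, B.2⟩
      rw [if_neg A, if_pos B, if_neg hC] at key
      exact ⟨X, ⟨B.1, huX, hvs, Or.inl ⟨hrX, hvX⟩, by omega⟩, B.2⟩
    · -- no drop at all: contradiction
      rw [if_neg A, if_neg B] at key
      by_cases C : u ∈ X ∧ y ∉ X
      · rw [if_pos C] at key; omega
      · rw [if_neg C] at key; omega

/-- fold blockers over a finite set. -/
lemma fold_blockers {w : V → V → ℕ} {r s u : V} (hE : Eulerian w) (hws : 1 ≤ w u s)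
    (S : Finset V)
    (hblk : ∀ y ∈ S, ∃ T v, Blk w r s u T v ∧ y ∉ T) :
    S = ∅ ∨ ∃ T v, Blk w r s u T v ∧ ∀ y ∈ S, y ∉ T := by
  induction S using Finset.induction_on with
  | empty => exact Or.inl rfl
  | @insert a S ha ih =>
    obtain ⟨Ta, va, hTa, haTa⟩ := hblk a (Finset.mem_insert_self a S)
    rcases ih (fun y hy => hblk y (Finset.mem_insert_of_mem hy)) with rfl | ⟨T, v, hT, hS⟩
    · exact Or.inr ⟨Ta, va, hTa, fun y hy => by
        rcases Finset.mem_insert.1 hy with rfl | hy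
        · exact haTa
        · exact absurd hy (Finset.notMem_empty y)⟩
    · obtain ⟨v'', hv''⟩ := merge_blk hE hws hTa hT
      refine Or.inr ⟨Ta ∩ T, v'', hv'', fun y hy hmem => ?_⟩
      rcases Finset.mem_insert.1 hy with rfl | hy
      · exact haTa (Finset.mem_inter.1 hmem).1
      · exact hS y hy (Finset.mem_inter.1 hmem).2

/-- Jackson-type splitting lemma (root demands, Eulerian digraph). -/
lemma jackson {w : V → V → ℕ} {r s u : V} (hE : Eulerian w)
    (hsr : s ≠ r) (hus : u ≠ s) (hws : 1 ≤ w u s) :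
    ∃ y : V, y ≠ s ∧ 1 ≤ w s y ∧ ∀ v : V, v ≠ r → v ≠ s →
      lambdaW w r v ≤ lambdaW (splitW w u s y) r v := by
  classical
  -- out-neighbors exist
  have hout : ∃ y : V, y ≠ s ∧ 1 ≤ w s y := by
    by_contra h
    push_neg at h
    have h1 : (∑ b : V, w s b) = w s s := by
      rw [← Finset.add_sum_erase _ _ (Finset.mem_univ s)]
      have : ∀ b ∈ Finset.univ.erase s, w s b = 0 := fun b hb => by
        have := h b (Finset.mem_erase.1 hb).1
        omega
      rw [Finset.sum_eq_zero this]
      omega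
    have h2 : w s s + w u s ≤ ∑ a : V, w a s := by
      have : ∑ a ∈ ({s, u} : Finset V), w a s ≤ ∑ a : V, w a s :=
        Finset.sum_le_sum_of_subset (Finset.subset_univ _)
      rwa [Finset.sum_pair (Ne.symm hus)] at this
    have := hE s
    omega
  by_contra hcon
  push_neg at hcon
  -- blockers for every out-neighbor
  set NP : Finset V := Finset.univ.filter (fun y => y ≠ s ∧ 1 ≤ w s y) with hNP
  have hblk : ∀ y ∈ NP, ∃ T v, Blk w r s u T v ∧ y ∉ T := by
    intro y hy
    rw [hNP, Finset.mem_filter] at hy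
    obtain ⟨v, hvr, hvs, hlt⟩ := hcon y hy.2.1 hy.2.2
    obtain ⟨T, hT, hyT⟩ := blocker_of_invalid hE hus hy.2.1 hws hy.2.2 hvr hvs hlt
    exact ⟨T, v, hT, hyT⟩
  rcases fold_blockers hE hws NP hblk with hempty | ⟨T, v, ⟨hsT, huT, hvs, hsep, hc⟩, hall⟩
  · obtain ⟨y, hy1, hy2⟩ := hout
    have : y ∈ NP := by rw [hNP, Finset.mem_filter]; exact ⟨Finset.mem_univ y, hy1, hy2⟩
    rw [hempty] at this
    exact absurd this (Finset.notMem_empty y)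
  · -- final counting contradiction
    have husr : u ∉ T := huT
    -- set identities
    have e1 : T ∪ Finset.univ.erase s = Finset.univ := by
      ext x
      simp only [Finset.mem_union, Finset.mem_erase, Finset.mem_univ, and_true, iff_true]
      by_cases hx : x = s
      · exact Or.inl (hx ▸ hsT)
      · exact Or.inr hx
    have e2 : T ∩ Finset.univ.erase s = T.erase s := by
      ext x
      simp only [Finset.mem_inter, Finset.mem_erase, Finset.mem_univ, and_true]
      tauto
    have e3 : T \ Finset.univ.erase s = {s} := by
      ext x
      rw [Finset.mem_sdiff, Finset.mem_erase, Finset.mem_singleton]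
      constructor
      · rintro ⟨hxT, hx⟩
        by_contra hne
        exact hx ⟨hne, Finset.mem_univ x⟩
      · rintro rfl
        exact ⟨hsT, fun h => h.1 rfl⟩
    have e4 : Finset.univ.erase s \ T = Tᶜ := by
      ext x
      simp only [Finset.mem_sdiff, Finset.mem_erase, Finset.mem_univ, and_true,
        Finset.mem_compl]
      constructor
      · rintro ⟨_, h⟩; exact h
      · intro h; exact ⟨fun hxs => h (hxs ▸ hsT), h⟩
    have iden := cut_defect w T (Finset.univ.erase s)
    rw [e1, e2, e3, e4, cutWeight_univ] at iden
    -- c (erase) lower bound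
    have hsepe : SepCut r (T.erase s) v := by
      rcases hsep with ⟨h1, h2⟩ | ⟨h1, h2⟩
      · exact Or.inl ⟨Finset.mem_erase.2 ⟨Ne.symm hsr, h1⟩, fun hm => h2 (Finset.mem_erase.1 hm).2⟩
      · exact Or.inr ⟨fun hm => h1 (Finset.mem_erase.1 hm).2, Finset.mem_erase.2 ⟨hvs, h2⟩⟩
    have hle := sep_le hE hsepe
    -- c(univ.erase s) = in-weight of s
    have hcompl : (Finset.univ.erase s)ᶜ = {s} := by
      ext x; simp
    have hIN : cutWeight w (Finset.univ.erase s) = ∑ p ∈ Finset.univ.erase s, w p s := by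
      unfold cutWeight
      rw [hcompl]
      exact Finset.sum_congr rfl fun p _ => Finset.sum_singleton _ _
    -- dW {s} Tᶜ = full out-weight
    have hsub : Tᶜ ⊆ Finset.univ.erase s := fun x hx =>
      Finset.mem_erase.2 ⟨fun hxs => (Finset.mem_compl.1 hx) (hxs ▸ hsT), Finset.mem_univ x⟩
    have hOUT : dW w {s} Tᶜ = ∑ q ∈ Finset.univ.erase s, w s q := by
      unfold dW
      rw [Finset.sum_singleton]
      refine Finset.sum_subset hsub ?_
      intro x hx hxT
      have hxs : x ≠ s := (Finset.mem_erase.1 hx).1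
      have hxT' : x ∈ T := by
        by_contra h
        exact hxT (Finset.mem_compl.2 h)
      by_contra hw0
      have hw1 : 1 ≤ w s x := by omega
      have : x ∈ NP := by
        rw [hNP, Finset.mem_filter]
        exact ⟨Finset.mem_univ x, hxs, hw1⟩
      exact hall x this hxT'
    have hbal : ∑ q ∈ Finset.univ.erase s, w s q = ∑ p ∈ Finset.univ.erase s, w p s := by
      have h1 := Finset.add_sum_erase Finset.univ (fun b => w s b) (Finset.mem_univ s)
      have h2 := Finset.add_sum_erase Finset.univ (fun a => w a s) (Finset.mem_univ s)
      have h3 := hE s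
      omega
    have hfin : w u s ≤ dW w Tᶜ {s} :=
      dW_single_le w (Finset.mem_compl.2 husr) (Finset.mem_singleton_self s)
    omega
end JacksonMain
section Reach
variable {V : Type*} [DecidableEq V] (r : V)

def Reach (F : Finset (V × V)) (v : V) : Prop :=
  Relation.ReflTransGen (fun a b => (a, b) ∈ F) r v

lemma mem_arbVerts_root (F : Finset (V × V)) : r ∈ arbVerts r F :=
  Finset.mem_insert_self r _

lemma mem_arbVerts_fst {F : Finset (V × V)} {e : V × V} (h : e ∈ F) : e.1 ∈ arbVerts r F :=
  Finset.mem_insert_of_mem (Finset.mem_biUnion.2 ⟨e, h, by simp⟩)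

lemma mem_arbVerts_snd {F : Finset (V × V)} {e : V × V} (h : e ∈ F) : e.2 ∈ arbVerts r F :=
  Finset.mem_insert_of_mem (Finset.mem_biUnion.2 ⟨e, h, by simp⟩)

lemma mem_arbVerts_iff {F : Finset (V × V)} {v : V} :
    v ∈ arbVerts r F ↔ v = r ∨ ∃ e ∈ F, v = e.1 ∨ v = e.2 := by
  unfold arbVerts
  simp only [Finset.mem_insert, Finset.mem_biUnion]
  constructor
  · rintro (h | ⟨e, he, hv⟩)
    · exact Or.inl h
    · right; exact ⟨e, he, by simpa using hv⟩
  · rintro (h | ⟨e, he, hv⟩)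
    · exact Or.inl h
    · right; exact ⟨e, he, by simpa using hv⟩

lemma reach_mono {F F' : Finset (V × V)} (h : F ⊆ F') {v : V} (hv : Reach r F v) :
    Reach r F' v :=
  Relation.ReflTransGen.mono (fun a b hab => h hab) _ _ hv

lemma reach_of_steps {F F' : Finset (V × V)}
    (H : ∀ a b : V, (a, b) ∈ F → Reach r F' a → Reach r F' b) {v : V}
    (h : Reach r F v) : Reach r F' v := by
  induction h with
  | refl => exact Relation.ReflTransGen.refl
  | tail _ hstep ih => exact H _ _ hstep ih

lemma reach_first_aux {F : Finset (V × V)} (x : V) {b : V} (h : Reach r F b) :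
    Relation.ReflTransGen (fun a c => (a, c) ∈ F ∧ a ≠ x) r b ∨
      Relation.ReflTransGen (fun a c => (a, c) ∈ F ∧ a ≠ x) r x := by
  induction h with
  | refl => exact Or.inl Relation.ReflTransGen.refl
  | tail _ hstep ih =>
    rcases ih with ih | ih
    · rename_i b c _
      by_cases hbx : b = x
      · exact Or.inr (hbx ▸ ih)
      · exact Or.inl (ih.tail ⟨hstep, hbx⟩)
    · exact Or.inr ih

lemma reach_first {F : Finset (V × V)} {x : V} (h : Reach r F x) :
    Relation.ReflTransGen (fun a c => (a, c) ∈ F ∧ a ≠ x) r x := by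
  rcases reach_first_aux r x h with h' | h' <;> exact h'

lemma reach_avoid {F : Finset (V × V)} (e : V × V) {x : V} (h : Reach r F x) :
    Reach r (F.erase e) x ∨ Reach r (F.erase e) e.1 := by
  induction h with
  | refl => exact Or.inl Relation.ReflTransGen.refl
  | tail _ hstep ih =>
    rcases ih with ih | ih
    · rename_i b c _
      by_cases hbc : (b, c) = e
      · subst hbc; exact Or.inr ih
      · exact Or.inl (ih.tail (Finset.mem_erase.2 ⟨hbc, hstep⟩))
    · exact Or.inr ih

lemma exists_in_arc {F : Finset (V × V)} (hF : IsArborescence r F) {v : V}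
    (hv : v ∈ arbVerts r F) (hvr : v ≠ r) : ∃ p : V, (p, v) ∈ F := by
  have := hF v hv
  rcases Relation.ReflTransGen.cases_tail this with h | ⟨c, _, hc⟩
  · exact absurd h hvr
  · exact ⟨c, hc⟩

lemma arb_transfer {F F' : Finset (V × V)} (harb : IsArborescence r F)
    (H : ∀ a b : V, (a, b) ∈ F → Reach r F' a → Reach r F' b)
    (hverts : ∀ v ∈ arbVerts r F', v ∈ arbVerts r F ∨ Reach r F' v) :
    IsArborescence r F' := by
  intro v hv
  rcases hverts v hv with h | h
  · exact reach_of_steps r H (harb v h)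
  · exact h

end Reach

section FilterCard
variable {ι : Type*} [Fintype ι] [DecidableEq ι]

lemma card_filter_mono {P Q : ι → Prop} [DecidablePred P] [DecidablePred Q]
    (h : ∀ j, P j → Q j) :
    (Finset.univ.filter P).card ≤ (Finset.univ.filter Q).card :=
  Finset.card_le_card (fun j hj => Finset.mem_filter.2
    ⟨Finset.mem_univ j, h j (Finset.mem_filter.1 hj).2⟩)

lemma filter_eq_insert {P Q : ι → Prop} [DecidablePred P] [DecidablePred Q] {i₀ : ι}
    (hP : ¬ P i₀) (hQ : Q i₀) (h : ∀ j, j ≠ i₀ → (P j ↔ Q j)) :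
    Finset.univ.filter Q = insert i₀ (Finset.univ.filter P) := by
  ext j
  simp only [Finset.mem_filter, Finset.mem_univ, true_and, Finset.mem_insert]
  by_cases hj : j = i₀
  · subst hj; simp [hQ]
  · rw [← h j hj]; simp [hj]

lemma card_filter_update_true {P Q : ι → Prop} [DecidablePred P] [DecidablePred Q] {i₀ : ι}
    (hP : ¬ P i₀) (hQ : Q i₀) (h : ∀ j, j ≠ i₀ → (P j ↔ Q j)) :
    (Finset.univ.filter Q).card = (Finset.univ.filter P).card + 1 := by
  rw [filter_eq_insert hP hQ h, Finset.card_insert_of_notMem (by simp [hP])]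

lemma card_filter_update_false {P Q : ι → Prop} [DecidablePred P] [DecidablePred Q] {i₀ : ι}
    (hP : P i₀) (hQ : ¬ Q i₀) (h : ∀ j, j ≠ i₀ → (P j ↔ Q j)) :
    (Finset.univ.filter P).card = (Finset.univ.filter Q).card + 1 :=
  card_filter_update_true hQ hP (fun j hj => (h j hj).symm)

lemma exists_not_of_card_filter_lt {P : ι → Prop} [DecidablePred P]
    (h : (Finset.univ.filter P).card < Fintype.card ι) : ∃ i, ¬ P i := by
  by_contra hc
  push_neg at hc
  rw [Finset.filter_true_of_mem (fun i _ => hc i), Finset.card_univ] at h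
  exact lt_irrefl _ h

lemma exists_of_card_filter_pos {P : ι → Prop} [DecidablePred P]
    (h : 0 < (Finset.univ.filter P).card) : ∃ i, P i := by
  obtain ⟨i, hi⟩ := Finset.card_pos.1 h
  exact ⟨i, (Finset.mem_filter.1 hi).2⟩

end FilterCard
section Packing
variable {V : Type*} [Fintype V] [DecidableEq V]

def GoodPack (r : V) (w : V → V → ℕ) (K : ℕ) (F : Fin K → Finset (V × V)) : Prop :=
  (∀ i, IsArborescence r (F i)) ∧
  (∀ i, ∀ e ∈ F i, e.1 ≠ e.2) ∧
  (∀ e : V × V, (Finset.univ.filter (fun i => e ∈ F i)).card ≤ w e.1 e.2) ∧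
  (∀ v : V, v ≠ r → min K (lambdaW w r v) ≤
    (Finset.univ.filter (fun i => v ∈ arbVerts r (F i))).card)

lemma cut_erase_univ (w : V → V → ℕ) (v : V) :
    cutWeight w (Finset.univ.erase v) = ∑ a ∈ Finset.univ.erase v, w a v := by
  unfold cutWeight
  have hcompl : (Finset.univ.erase v)ᶜ = {v} := by ext x; simp
  rw [hcompl]
  exact Finset.sum_congr rfl fun p _ => Finset.sum_singleton _ _

lemma arbVerts_empty (r : V) : arbVerts r (∅ : Finset (V × V)) = {r} := by
  unfold arbVerts
  simp

lemma arb_empty (r : V) : IsArborescence r (∅ : Finset (V × V)) := by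
  intro v hv
  rw [arbVerts_empty, Finset.mem_singleton] at hv
  subst hv
  exact Relation.ReflTransGen.refl

/-- base case: no arcs entering any non-root vertex. -/
lemma pack_base {r : V} {w : V → V → ℕ}
    (h : ∀ v : V, v ≠ r → ∑ a ∈ Finset.univ.erase v, w a v = 0) (K : ℕ) :
    ∃ F : Fin K → Finset (V × V), GoodPack r w K F := by
  refine ⟨fun _ => ∅, fun i => arb_empty r, fun i e he => absurd he (Finset.notMem_empty e),
    fun e => by simp, fun v hv => ?_⟩
  have hlam : lambdaW w r v ≤ 0 := by
    have hle := lambdaW_le w r (v := v) (X := Finset.univ.erase v)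
      (Finset.mem_erase.2 ⟨Ne.symm hv, Finset.mem_univ r⟩)
      (fun hm => (Finset.mem_erase.1 hm).1 rfl)
    rw [cut_erase_univ, h v hv] at hle
    exact hle
  simp [Nat.le_zero.1 hlam]

lemma arbVerts_subset {r : V} {F F' : Finset (V × V)} (h : F ⊆ F') :
    arbVerts r F ⊆ arbVerts r F' := by
  intro v hv
  rcases (mem_arbVerts_iff r).1 hv with rfl | ⟨e, he, hor⟩
  · exact mem_arbVerts_root _ F'
  · rcases hor with rfl | rfl
    · exact mem_arbVerts_fst r (h he)
    · exact mem_arbVerts_snd r (h he)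

lemma card_filter_le_succ {ι : Type*} [Fintype ι] [DecidableEq ι]
    {P Q : ι → Prop} [DecidablePred P] [DecidablePred Q] (i₀ : ι)
    (h : ∀ j, j ≠ i₀ → Q j → P j) :
    (Finset.univ.filter Q).card ≤ (Finset.univ.filter P).card + 1 := by
  have hsub : Finset.univ.filter Q ⊆ insert i₀ (Finset.univ.filter P) := by
    intro j hj
    rw [Finset.mem_filter] at hj
    by_cases hji : j = i₀
    · exact hji ▸ Finset.mem_insert_self _ _
    · exact Finset.mem_insert_of_mem (Finset.mem_filter.2 ⟨Finset.mem_univ j, h j hji hj.2⟩)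
  calc (Finset.univ.filter Q).card ≤ (insert i₀ (Finset.univ.filter P)).card :=
        Finset.card_le_card hsub
    _ ≤ (Finset.univ.filter P).card + 1 := Finset.card_insert_le _ _

lemma card_filter_congr {ι : Type*} [Fintype ι]
    {P Q : ι → Prop} [DecidablePred P] [DecidablePred Q] (h : ∀ j, P j ↔ Q j) :
    (Finset.univ.filter P).card = (Finset.univ.filter Q).card := by
  congr 1
  exact Finset.filter_congr fun j _ => by rw [h j]

/-- the top-up operation: raise the coverage of s to m by attaching one arc (x,s). -/
lemma topup_lemma {r s x : V} {K m : ℕ}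
    {G : Fin K → Finset (V × V)}
    (harb : ∀ i, IsArborescence r (G i))
    (hloop : ∀ i, ∀ e ∈ G i, e.1 ≠ e.2)
    (hxs : x ≠ s) (hmK : m ≤ K)
    (hcovx : x ≠ r → m ≤ (Finset.univ.filter (fun i => x ∈ arbVerts r (G i))).card)
    (hms : m ≤ (Finset.univ.filter (fun i => s ∈ arbVerts r (G i))).card + 1) :
    ∃ G' : Fin K → Finset (V × V),
      (∀ i, IsArborescence r (G' i)) ∧
      (∀ i, ∀ e ∈ G' i, e.1 ≠ e.2) ∧
      (∀ e : V × V, (Finset.univ.filter (fun i => e ∈ G' i)).card ≤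
        (Finset.univ.filter (fun i => e ∈ G i)).card + (if e = (x, s) then 1 else 0)) ∧
      (∀ v : V, (Finset.univ.filter (fun i => v ∈ arbVerts r (G i))).card ≤
        (Finset.univ.filter (fun i => v ∈ arbVerts r (G' i))).card) ∧
      m ≤ (Finset.univ.filter (fun i => s ∈ arbVerts r (G' i))).card := by
  classical
  by_cases hdone : m ≤ (Finset.univ.filter (fun i => s ∈ arbVerts r (G i))).card
  · exact ⟨G, harb, hloop, fun e => Nat.le_add_right _ _, fun v => le_refl _, hdone⟩
  · push_neg at hdone
    -- find a unit missing s where x is available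
    have hex : ∃ i, (x = r ∨ x ∈ arbVerts r (G i)) ∧ s ∉ arbVerts r (G i) := by
      by_cases hxr : x = r
      · obtain ⟨i, hi⟩ := exists_not_of_card_filter_lt
          (lt_of_lt_of_le hdone (by simpa [Fintype.card_fin] using hmK))
        exact ⟨i, Or.inl hxr, hi⟩
      · by_contra hc
        push_neg at hc
        have hmono : ∀ j, x ∈ arbVerts r (G j) → s ∈ arbVerts r (G j) := by
          intro j hj
          by_contra hs
          exact hs (hc j (Or.inr hj))
        have := card_filter_mono hmono
        have := hcovx hxr
        omega
    obtain ⟨i₁, hxavail, hsmiss⟩ := hex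
    set F' := insert (x, s) (G i₁) with hF'
    have hreach_x : Reach r F' x := by
      rcases hxavail with rfl | hx
      · exact Relation.ReflTransGen.refl
      · exact reach_mono r (Finset.subset_insert _ _) (harb i₁ x hx)
    have hreach_s : Reach r F' s := hreach_x.tail (Finset.mem_insert_self _ _)
    have harb' : IsArborescence r F' := by
      refine arb_transfer r (harb i₁)
        (fun a b hab hra => hra.tail (Finset.mem_insert_of_mem hab)) ?_
      intro v hv
      rcases (mem_arbVerts_iff r).1 hv with rfl | ⟨e, he, hor⟩
      · exact Or.inr Relation.ReflTransGen.refl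
      · rcases Finset.mem_insert.1 he with rfl | he'
        · rcases hor with rfl | rfl
          · rcases hxavail with rfl | hx
            · exact Or.inr Relation.ReflTransGen.refl
            · exact Or.inl hx
          · exact Or.inr hreach_s
        · rcases hor with rfl | rfl
          · exact Or.inl (mem_arbVerts_fst r he')
          · exact Or.inl (mem_arbVerts_snd r he')
    refine ⟨Function.update G i₁ F', ?_, ?_, ?_, ?_, ?_⟩
    · intro i
      by_cases hi : i = i₁
      · subst hi; rw [Function.update_self]; exact harb'
      · rw [Function.update_of_ne hi]; exact harb i
    · intro i e he
      by_cases hi : i = i₁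
      · subst hi
        rw [Function.update_self] at he
        rcases Finset.mem_insert.1 he with rfl | he'
        · exact hxs
        · exact hloop _ e he'
      · rw [Function.update_of_ne hi] at he
        exact hloop i e he
    · intro e
      by_cases hexs : e = (x, s)
      · subst hexs
        simp only [if_pos rfl]
        refine card_filter_le_succ i₁ ?_
        intro j hj hQ
        rwa [Function.update_of_ne hj] at hQ
      · simp only [if_neg hexs, add_zero]
        refine card_filter_mono ?_
        intro j hQ
        by_cases hj : j = i₁
        · subst hj
          rw [Function.update_self] at hQ
          rcases Finset.mem_insert.1 hQ with rfl | h
          · exact absurd rfl hexs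
          · exact h
        · rwa [Function.update_of_ne hj] at hQ
    · intro v
      refine card_filter_mono ?_
      intro j hj
      by_cases hji : j = i₁
      · subst hji
        rw [Function.update_self]
        exact arbVerts_subset (Finset.subset_insert _ _) hj
      · rwa [Function.update_of_ne hji]
    · have : (Finset.univ.filter (fun i => s ∈ arbVerts r (Function.update G i₁ F' i))).card
          = (Finset.univ.filter (fun i => s ∈ arbVerts r (G i))).card + 1 := by
        refine card_filter_update_true hsmiss ?_ ?_
        · rw [Function.update_self]
          exact mem_arbVerts_snd r (Finset.mem_insert_self _ _)
        · intro j hj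
          rw [Function.update_of_ne hj]
      omega
end Packing
section SplitFacts
variable {V : Type*} [Fintype V] [DecidableEq V]

lemma sum_ite_unit (c : V) : (∑ b : V, if b = c then (1:ℕ) else 0) = 1 := by
  simp

lemma sum_ite_row (a c v : V) :
    (∑ b : V, if v = a ∧ b = c then (1:ℕ) else 0) = if v = a then 1 else 0 := by
  by_cases h : v = a <;> simp [h]

lemma sum_ite_col (a c v : V) :
    (∑ b : V, if b = a ∧ v = c then (1:ℕ) else 0) = if v = c then 1 else 0 := by
  by_cases h : v = c <;> simp [h]

lemma eulerian_splitW {w : V → V → ℕ} {u s y : V} (hE : Eulerian w)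
    (hus : u ≠ s) (hys : y ≠ s) (h1 : 1 ≤ w u s) (h2 : 1 ≤ w s y) :
    Eulerian (splitW w u s y) := by
  intro v
  have hrow : (∑ b : V, splitW w u s y v b) + (if v = u then 1 else 0) + (if v = s then 1 else 0)
      = (∑ b : V, w v b) + (if v = u then 1 else 0) := by
    have hpt := fun b => splitW_pointwise w hus hys h1 h2 v b
    have := Finset.sum_congr (rfl : (Finset.univ : Finset V) = Finset.univ)
      (fun b _ => hpt b)
    rw [Finset.sum_add_distrib, Finset.sum_add_distrib, Finset.sum_add_distrib,
      sum_ite_row u s v, sum_ite_row s y v, sum_ite_row u y v] at this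
    omega
  have hcol : (∑ a : V, splitW w u s y a v) + (if v = s then 1 else 0) + (if v = y then 1 else 0)
      = (∑ a : V, w a v) + (if v = y then 1 else 0) := by
    have hpt := fun a => splitW_pointwise w hus hys h1 h2 a v
    have := Finset.sum_congr (rfl : (Finset.univ : Finset V) = Finset.univ)
      (fun a _ => hpt a)
    rw [Finset.sum_add_distrib, Finset.sum_add_distrib, Finset.sum_add_distrib,
      sum_ite_col u s v, sum_ite_col s y v, sum_ite_col u y v] at this
    omega
  have := hE v
  omega

lemma total_splitW {w : V → V → ℕ} {u s y : V}
    (hus : u ≠ s) (hys : y ≠ s) (h1 : 1 ≤ w u s) (h2 : 1 ≤ w s y) :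
    (∑ p : V, ∑ q : V, splitW w u s y p q) + 1 = ∑ p : V, ∑ q : V, w p q := by
  have hpt : ∀ p q : V, splitW w u s y p q + (if p = u ∧ q = s then 1 else 0)
      + (if p = s ∧ q = y then 1 else 0) = w p q + (if p = u ∧ q = y then 1 else 0) :=
    splitW_pointwise w hus hys h1 h2
  have hsum : (∑ p : V, ∑ q : V, splitW w u s y p q)
      + (∑ p : V, ∑ q : V, (if p = u ∧ q = s then (1:ℕ) else 0))
      + (∑ p : V, ∑ q : V, (if p = s ∧ q = y then (1:ℕ) else 0))
      = (∑ p : V, ∑ q : V, w p q)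
      + (∑ p : V, ∑ q : V, (if p = u ∧ q = y then (1:ℕ) else 0)) := by
    rw [← Finset.sum_add_distrib, ← Finset.sum_add_distrib, ← Finset.sum_add_distrib]
    refine Finset.sum_congr rfl fun p _ => ?_
    rw [← Finset.sum_add_distrib, ← Finset.sum_add_distrib, ← Finset.sum_add_distrib]
    exact Finset.sum_congr rfl fun q _ => hpt p q
  rw [sum_delta u s (fun _ _ => 1), sum_delta s y (fun _ _ => 1),
    sum_delta u y (fun _ _ => 1)] at hsum
  omega

lemma splitW_us {w : V → V → ℕ} {u s y : V} (h1 : 1 ≤ w u s) :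
    splitW w u s y u s + 1 = w u s := by
  unfold splitW
  rw [if_pos ⟨rfl, rfl⟩]
  omega

lemma splitW_sy {w : V → V → ℕ} {u s y : V} (hus : u ≠ s) (h2 : 1 ≤ w s y) :
    splitW w u s y s y + 1 = w s y := by
  unfold splitW
  rw [if_neg (fun h => hus (h.1.symm)), if_pos ⟨rfl, rfl⟩]
  omega

lemma splitW_uy {w : V → V → ℕ} {u s y : V} (hus : u ≠ s) (hys : y ≠ s) :
    splitW w u s y u y = w u y + 1 := by
  unfold splitW
  rw [if_neg (fun h => hys h.2), if_neg (fun h => hus h.1), if_pos ⟨rfl, rfl⟩]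

lemma splitW_off {w : V → V → ℕ} {u s y : V} (a b : V)
    (h1 : ¬(a = u ∧ b = s)) (h2 : ¬(a = s ∧ b = y)) (h3 : ¬(a = u ∧ b = y)) :
    splitW w u s y a b = w a b := by
  unfold splitW
  rw [if_neg h1, if_neg h2, if_neg h3]

end SplitFacts
section Step
variable {V : Type*} [Fintype V] [DecidableEq V]

lemma ne_pair {e : V × V} {a b : V} (h : e ≠ (a, b)) : ¬(e.1 = a ∧ e.2 = b) :=
  fun hh => h (Prod.ext_iff.2 ⟨hh.1, hh.2⟩)

lemma pack_step {w : V → V → ℕ} {r s u y : V} (hE : Eulerian w)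
    (hsr : s ≠ r) (hus : u ≠ s) (hys : y ≠ s) (hws : 1 ≤ w u s) (hwy : 1 ≤ w s y)
    (hminpred : ∀ x : V, x ≠ r → x ≠ s → 1 ≤ w x s → lambdaW w r s ≤ lambdaW w r x)
    (hpres : ∀ v : V, v ≠ r → v ≠ s → lambdaW w r v ≤ lambdaW (splitW w u s y) r v)
    {K : ℕ} {F : Fin K → Finset (V × V)} (hF : GoodPack r (splitW w u s y) K F) :
    ∃ G : Fin K → Finset (V × V), GoodPack r w K G := by
  classical
  obtain ⟨harb, hloop, hcap, hcov⟩ := hF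
  set m := min K (lambdaW w r s) with hm
  have hmK : m ≤ K := min_le_left _ _
  -- λ drops at most 1 at s
  have hlams : lambdaW w r s ≤ lambdaW (splitW w u s y) r s + 1 := by
    obtain ⟨X, hrX, hsX, hcX⟩ := lambdaW_exists (splitW w u s y) r hsr
    have key := splitW_cut w hus hys hws hwy X
    have h1 := lambdaW_le w r hrX hsX
    have hAB : (if u ∈ X ∧ s ∉ X then (1:ℕ) else 0) + (if s ∈ X ∧ y ∉ X then 1 else 0) ≤ 1 := by
      by_cases h : s ∈ X
      · rw [if_neg (fun hh => hh.2 h)]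
        split <;> omega
      · rw [if_neg (fun hh : s ∈ X ∧ y ∉ X => h hh.1)]
        split <;> omega
    have hC : (0:ℕ) ≤ (if u ∈ X ∧ y ∉ X then 1 else 0) := Nat.zero_le _
    omega
  have hm1 : m ≤ (Finset.univ.filter (fun i => s ∈ arbVerts r (F i))).card + 1 := by
    have := hcov s hsr
    omega
  have hcovv : ∀ v : V, v ≠ r → v ≠ s →
      min K (lambdaW w r v) ≤ (Finset.univ.filter (fun i => v ∈ arbVerts r (F i))).card := by
    intro v h1 h2
    have := hcov v h1
    have := hpres v h1 h2
    omega
  have hpredcov : ∀ x : V, x ≠ r → x ≠ s → 1 ≤ w x s →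
      m ≤ (Finset.univ.filter (fun i => x ∈ arbVerts r (F i))).card := by
    intro x h1 h2 h3
    have := hcovv x h1 h2
    have := hminpred x h1 h2 h3
    omega
  -- the assembler : ledgered family + one top-up slot ⟹ GoodPack
  have assemble : ∀ (G₁ : Fin K → Finset (V × V)) (x : V), x ≠ s →
      (x ≠ r → m ≤ (Finset.univ.filter (fun i => x ∈ arbVerts r (G₁ i))).card) →
      (∀ i, IsArborescence r (G₁ i)) →
      (∀ i, ∀ e ∈ G₁ i, e.1 ≠ e.2) →
      (∀ e : V × V, (Finset.univ.filter (fun i => e ∈ G₁ i)).card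
          + (if e = (x, s) then 1 else 0) ≤ w e.1 e.2) →
      (∀ v : V, (Finset.univ.filter (fun i => v ∈ arbVerts r (F i))).card
          ≤ (Finset.univ.filter (fun i => v ∈ arbVerts r (G₁ i))).card) →
      (m ≤ (Finset.univ.filter (fun i => s ∈ arbVerts r (G₁ i))).card + 1) →
      ∃ G, GoodPack r w K G := by
    intro G₁ x hxs hcovx harb₁ hloop₁ hledger hcovmono hs1
    obtain ⟨G', a1, a2, a3, a4, a5⟩ := topup_lemma harb₁ hloop₁ hxs hmK hcovx hs1
    refine ⟨G', a1, a2, fun e => ?_, fun v hvr => ?_⟩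
    · have := a3 e
      have := hledger e
      omega
    · by_cases hvs : v = s
      · subst hvs
        rw [← hm]
        exact a5
      · have := hcovv v hvr hvs
        have := hcovmono v
        have := a4 v
        omega
  by_cases hov : w u y < (Finset.univ.filter (fun i => (u, y) ∈ F i)).card
  case neg =>
    -- no overload : just top-up
    push_neg at hov
    refine assemble F u hus (fun hur => hpredcov u hur hus hws) harb hloop ?_
      (fun v => le_refl _) hm1
    intro e
    by_cases h1 : e = (u, s)
    · subst h1
      have h4 : (Finset.univ.filter (fun i => (u, s) ∈ F i)).card ≤ splitW w u s y u s :=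
        hcap (u, s)
      have h5 := splitW_us (w := w) (y := y) hws
      rw [if_pos rfl]
      have h6 : (Finset.univ.filter (fun i => ((u, s) : V × V) ∈ F i)).card + 1 ≤ w u s := by
        omega
      exact h6
    · rw [if_neg h1, add_zero]
      by_cases h2 : e = (s, y)
      · subst h2
        have h4 : (Finset.univ.filter (fun i => (s, y) ∈ F i)).card ≤ splitW w u s y s y :=
          hcap (s, y)
        have h5 := splitW_sy (w := w) hus hwy
        have h6 : (Finset.univ.filter (fun i => ((s, y) : V × V) ∈ F i)).card ≤ w s y := by
          omega
        exact h6
      · by_cases h3 : e = (u, y)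
        · subst h3
          exact hov
        · have h4 : (Finset.univ.filter (fun i => e ∈ F i)).card ≤ splitW w u s y e.1 e.2 :=
            hcap e
          rwa [splitW_off e.1 e.2 (ne_pair h1) (ne_pair h2) (ne_pair h3)] at h4
  case pos =>
    have hcntpos : 0 < (Finset.univ.filter (fun i => (u, y) ∈ F i)).card := by omega
    obtain ⟨iu, hiu⟩ := exists_of_card_filter_pos hcntpos
    have huy : u ≠ y := hloop iu (u, y) hiu
    have hcnteq : (Finset.univ.filter (fun i => (u, y) ∈ F i)).card = w u y + 1 := by
      have h4 : (Finset.univ.filter (fun i => (u, y) ∈ F i)).card ≤ splitW w u s y u y :=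
        hcap (u, y)
      have := splitW_uy (w := w) (s := s) hus hys
      omega
    by_cases hv1 : ∃ i, (u, y) ∈ F i ∧ s ∉ arbVerts r (F i)
    case pos =>
      obtain ⟨i₁, hmem, hsno⟩ := hv1
      set Fo := F i₁ with hFo
      set F' := insert ((u, s) : V × V) (insert ((s, y) : V × V) (Fo.erase (u, y))) with hF'
      have hmem_us : ((u, s) : V × V) ∈ F' := Finset.mem_insert_self _ _
      have hmem_sy : ((s, y) : V × V) ∈ F' :=
        Finset.mem_insert_of_mem (Finset.mem_insert_self _ _)
      have hsub : Fo.erase (u, y) ⊆ F' := fun e he =>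
        Finset.mem_insert_of_mem (Finset.mem_insert_of_mem he)
      have hmemF' : ∀ e ∈ F', e = ((u, s) : V × V) ∨ e = ((s, y) : V × V)
          ∨ (e ∈ Fo ∧ e ≠ (u, y)) := by
        intro e he
        rcases Finset.mem_insert.1 he with rfl | he2
        · exact Or.inl rfl
        rcases Finset.mem_insert.1 he2 with rfl | he3
        · exact Or.inr (Or.inl rfl)
        · exact Or.inr (Or.inr ⟨(Finset.mem_erase.1 he3).2, (Finset.mem_erase.1 he3).1⟩)
      have hnotmem_uy : ((u, y) : V × V) ∉ F' := by
        intro h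
        rcases hmemF' _ h with h | h | h
        · exact hys (Prod.ext_iff.1 h).2
        · exact hus (Prod.ext_iff.1 h).1
        · exact h.2 rfl
      have H : ∀ a b : V, (a, b) ∈ Fo → Reach r F' a → Reach r F' b := by
        intro a b hab hra
        by_cases h : (a, b) = ((u, y) : V × V)
        · injection h with ha hb
          subst ha; subst hb
          exact (hra.tail hmem_us).tail hmem_sy
        · exact hra.tail (hsub (Finset.mem_erase.2 ⟨h, hab⟩))
      have hru : Reach r F' u := reach_of_steps r H (harb i₁ u (mem_arbVerts_fst r hmem))
      have hrs : Reach r F' s := hru.tail hmem_us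
      have harb' : IsArborescence r F' := by
        refine arb_transfer r (harb i₁) H ?_
        intro v hv
        rcases (mem_arbVerts_iff r).1 hv with rfl | ⟨e, he, hor⟩
        · exact Or.inr Relation.ReflTransGen.refl
        rcases hmemF' e he with rfl | rfl | ⟨heF, _⟩
        · rcases hor with rfl | rfl
          · exact Or.inl (mem_arbVerts_fst r hmem)
          · exact Or.inr hrs
        · rcases hor with rfl | rfl
          · exact Or.inr hrs
          · exact Or.inl (mem_arbVerts_snd r hmem)
        · rcases hor with rfl | rfl
          · exact Or.inl (mem_arbVerts_fst r heF)
          · exact Or.inl (mem_arbVerts_snd r heF)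
      have hloop' : ∀ e ∈ F', e.1 ≠ e.2 := by
        intro e he
        rcases hmemF' e he with rfl | rfl | ⟨heF, _⟩
        · exact hus
        · exact fun hh => hys hh.symm
        · exact hloop i₁ e heF
      have hvertsup : ∀ v ∈ arbVerts r Fo, v ∈ arbVerts r F' := by
        intro v hv
        rcases (mem_arbVerts_iff r).1 hv with hvr2 | ⟨e, he, hor⟩
        · subst hvr2; exact mem_arbVerts_root _ F'
        by_cases he' : e = ((u, y) : V × V)
        · subst he'
          rcases hor with rfl | rfl
          · exact mem_arbVerts_fst r hmem_us
          · exact mem_arbVerts_snd r hmem_sy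
        · have hin : e ∈ F' := hsub (Finset.mem_erase.2 ⟨he', he⟩)
          rcases hor with rfl | rfl
          · exact mem_arbVerts_fst r hin
          · exact mem_arbVerts_snd r hin
      have hsv' : s ∈ arbVerts r F' := mem_arbVerts_fst r hmem_sy
      refine ⟨Function.update F i₁ F', ?_, ?_, ?_, ?_⟩
      · intro i
        by_cases hi : i = i₁
        · subst hi; rw [Function.update_self]; exact harb'
        · rw [Function.update_of_ne hi]; exact harb i
      · intro i e he
        by_cases hi : i = i₁
        · subst hi; rw [Function.update_self] at he; exact hloop' e he
        · rw [Function.update_of_ne hi] at he; exact hloop i e he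
      · intro e
        have hoff : ∀ j, j ≠ i₁ →
            (e ∈ Function.update F i₁ F' j ↔ e ∈ F j) := by
          intro j hj
          rw [Function.update_of_ne hj]
        by_cases h3 : e = ((u, y) : V × V)
        · subst h3
          have heq : (Finset.univ.filter (fun i => ((u, y) : V × V) ∈ F i)).card
              = (Finset.univ.filter
                  (fun i => ((u, y) : V × V) ∈ Function.update F i₁ F' i)).card + 1 := by
            refine card_filter_update_false hmem ?_ (fun j hj => (hoff j hj).symm)
            rw [Function.update_self]
            exact hnotmem_uy
          have h6 : (Finset.univ.filter
              (fun i => ((u, y) : V × V) ∈ Function.update F i₁ F' i)).card ≤ w u y := by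
            omega
          exact h6
        · by_cases h1 : e = ((u, s) : V × V)
          · subst h1
            have hle : (Finset.univ.filter
                (fun i => ((u, s) : V × V) ∈ Function.update F i₁ F' i)).card ≤
                (Finset.univ.filter (fun i => ((u, s) : V × V) ∈ F i)).card + 1 :=
              card_filter_le_succ i₁ (fun j hj hQ => (hoff j hj).1 hQ)
            have h4 : (Finset.univ.filter (fun i => ((u, s) : V × V) ∈ F i)).card
                ≤ splitW w u s y u s := hcap (u, s)
            have h5 := splitW_us (w := w) (y := y) hws
            have h6 : (Finset.univ.filter
                (fun i => ((u, s) : V × V) ∈ Function.update F i₁ F' i)).card ≤ w u s := by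
              omega
            exact h6
          · by_cases h2 : e = ((s, y) : V × V)
            · subst h2
              have hle : (Finset.univ.filter
                  (fun i => ((s, y) : V × V) ∈ Function.update F i₁ F' i)).card ≤
                  (Finset.univ.filter (fun i => ((s, y) : V × V) ∈ F i)).card + 1 :=
                card_filter_le_succ i₁ (fun j hj hQ => (hoff j hj).1 hQ)
              have h4 : (Finset.univ.filter (fun i => ((s, y) : V × V) ∈ F i)).card
                  ≤ splitW w u s y s y := hcap (s, y)
              have h5 := splitW_sy (w := w) hus hwy
              have h6 : (Finset.univ.filter
                  (fun i => ((s, y) : V × V) ∈ Function.update F i₁ F' i)).card ≤ w s y := by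
                omega
              exact h6
            · have hle : (Finset.univ.filter
                  (fun i => e ∈ Function.update F i₁ F' i)).card ≤
                  (Finset.univ.filter (fun i => e ∈ F i)).card := by
                refine card_filter_mono ?_
                intro j hQ
                by_cases hj : j = i₁
                · subst hj
                  rw [Function.update_self] at hQ
                  rcases hmemF' e hQ with rfl | rfl | ⟨heF, _⟩
                  · exact absurd rfl h1
                  · exact absurd rfl h2
                  · exact heF
                · exact (hoff j hj).1 hQ
              have h4 : (Finset.univ.filter (fun i => e ∈ F i)).card
                  ≤ splitW w u s y e.1 e.2 := hcap e
              rw [splitW_off e.1 e.2 (ne_pair h1) (ne_pair h2) (ne_pair h3)] at h4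
              omega
      · intro v hvr
        have hcovmono : (Finset.univ.filter (fun i => v ∈ arbVerts r (F i))).card ≤
            (Finset.univ.filter
              (fun i => v ∈ arbVerts r (Function.update F i₁ F' i))).card := by
          refine card_filter_mono ?_
          intro j hj
          by_cases hji : j = i₁
          · subst hji
            rw [Function.update_self]
            exact hvertsup v hj
          · rwa [Function.update_of_ne hji]
        by_cases hvs : v = s
        · rw [hvs]
          have heq : (Finset.univ.filter
              (fun i => s ∈ arbVerts r (Function.update F i₁ F' i))).card
              = (Finset.univ.filter (fun i => s ∈ arbVerts r (F i))).card + 1 := by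
            refine card_filter_update_true hsno ?_ ?_
            · rw [Function.update_self]
              exact hsv'
            · intro j hj
              rw [Function.update_of_ne hj]
          omega
        · have := hcovv v hvr hvs
          omega
    case neg =>
      push_neg at hv1
      obtain ⟨i₀, hmem⟩ := exists_of_card_filter_pos hcntpos
      have hsin : s ∈ arbVerts r (F i₀) := hv1 i₀ hmem
      set Fo := F i₀ with hFo
      by_cases hv2 : Reach r (Fo.erase (u, y)) s
      · -- v2 : reroute through existing access to s
        set F' := insert ((s, y) : V × V) (Fo.erase (u, y)) with hF'
        have hmem_sy : ((s, y) : V × V) ∈ F' := Finset.mem_insert_self _ _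
        have hsub : Fo.erase (u, y) ⊆ F' := fun e he => Finset.mem_insert_of_mem he
        have hmemF' : ∀ e ∈ F', e = ((s, y) : V × V) ∨ (e ∈ Fo ∧ e ≠ (u, y)) := by
          intro e he
          rcases Finset.mem_insert.1 he with rfl | he2
          · exact Or.inl rfl
          · exact Or.inr ⟨(Finset.mem_erase.1 he2).2, (Finset.mem_erase.1 he2).1⟩
        have hnot_uy : ((u, y) : V × V) ∉ F' := by
          intro h
          rcases hmemF' _ h with h | h
          · exact hus (Prod.ext_iff.1 h).1
          · exact h.2 rfl
        have hrs : Reach r F' s := reach_mono r hsub hv2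
        have H : ∀ a b : V, (a, b) ∈ Fo → Reach r F' a → Reach r F' b := by
          intro a b hab hra
          by_cases h : (a, b) = ((u, y) : V × V)
          · injection h with ha hb
            subst ha; subst hb
            exact hrs.tail hmem_sy
          · exact hra.tail (hsub (Finset.mem_erase.2 ⟨h, hab⟩))
        have harb' : IsArborescence r F' := by
          refine arb_transfer r (harb i₀) H ?_
          intro v hv
          rcases (mem_arbVerts_iff r).1 hv with hvr2 | ⟨e, he, hor⟩
          · subst hvr2; exact Or.inr Relation.ReflTransGen.refl
          rcases hmemF' e he with rfl | ⟨heF, _⟩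
          · rcases hor with rfl | rfl
            · exact Or.inl hsin
            · exact Or.inl (mem_arbVerts_snd r hmem)
          · rcases hor with rfl | rfl
            · exact Or.inl (mem_arbVerts_fst r heF)
            · exact Or.inl (mem_arbVerts_snd r heF)
        have hloop' : ∀ e ∈ F', e.1 ≠ e.2 := by
          intro e he
          rcases hmemF' e he with rfl | ⟨heF, _⟩
          · exact fun hh => hys hh.symm
          · exact hloop i₀ e heF
        have hy_in : y ∈ arbVerts r F' := mem_arbVerts_snd r hmem_sy
        have hu_in : u ∈ arbVerts r F' := by
          by_cases hur : u = r
          · rw [hur]; exact mem_arbVerts_root _ F'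
          · obtain ⟨p, hp⟩ := exists_in_arc r (harb i₀) (mem_arbVerts_fst r hmem) hur
            have hpne : ((p, u) : V × V) ≠ (u, y) := fun hh => huy (Prod.ext_iff.1 hh).2
            exact mem_arbVerts_snd r (hsub (Finset.mem_erase.2 ⟨hpne, hp⟩))
        have hvertsup : ∀ v ∈ arbVerts r Fo, v ∈ arbVerts r F' := by
          intro v hv
          rcases (mem_arbVerts_iff r).1 hv with hvr2 | ⟨e, he, hor⟩
          · subst hvr2; exact mem_arbVerts_root _ F'
          by_cases he' : e = ((u, y) : V × V)
          · subst he'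
            rcases hor with h1 | h1
            · rw [h1]; exact hu_in
            · rw [h1]; exact hy_in
          · have hin : e ∈ F' := hsub (Finset.mem_erase.2 ⟨he', he⟩)
            rcases hor with h1 | h1
            · rw [h1]; exact mem_arbVerts_fst r hin
            · rw [h1]; exact mem_arbVerts_snd r hin
        have hsv' : s ∈ arbVerts r F' := mem_arbVerts_fst r hmem_sy
        set G₁ := Function.update F i₀ F' with hG₁
        have hoff : ∀ j, j ≠ i₀ → (∀ e : V × V, (e ∈ G₁ j ↔ e ∈ F j)) := by
          intro j hj e
          rw [hG₁, Function.update_of_ne hj]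
        have hcovmono : ∀ v : V,
            (Finset.univ.filter (fun i => v ∈ arbVerts r (F i))).card ≤
            (Finset.univ.filter (fun i => v ∈ arbVerts r (G₁ i))).card := by
          intro v
          refine card_filter_mono ?_
          intro j hj
          by_cases hji : j = i₀
          · subst hji
            rw [hG₁, Function.update_self]
            exact hvertsup v hj
          · rw [hG₁, Function.update_of_ne hji]; exact hj
        refine assemble G₁ u hus
          (fun hur => le_trans (hpredcov u hur hus hws) (hcovmono u)) ?_ ?_ ?_ hcovmono
          (le_trans hm1 (by have := hcovmono s; omega)) 
        · intro i
          by_cases hi : i = i₀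
          · subst hi; rw [hG₁, Function.update_self]; exact harb'
          · rw [hG₁, Function.update_of_ne hi]; exact harb i
        · intro i e he
          by_cases hi : i = i₀
          · subst hi; rw [hG₁, Function.update_self] at he; exact hloop' e he
          · rw [hG₁, Function.update_of_ne hi] at he; exact hloop i e he
        · intro e
          by_cases h3 : e = ((u, y) : V × V)
          · subst h3
            rw [if_neg (fun hh : ((u, y) : V × V) = (u, s) => hys (Prod.ext_iff.1 hh).2)]
            have heq : (Finset.univ.filter (fun i => ((u, y) : V × V) ∈ F i)).card
                = (Finset.univ.filter (fun i => ((u, y) : V × V) ∈ G₁ i)).card + 1 := by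
              refine card_filter_update_false hmem ?_ (fun j hj => ((hoff j hj) _).symm)
              rw [hG₁, Function.update_self]
              exact hnot_uy
            have h6 : (Finset.univ.filter (fun i => ((u, y) : V × V) ∈ G₁ i)).card + 0
                ≤ w u y := by omega
            simpa using h6
          · by_cases h2 : e = ((s, y) : V × V)
            · subst h2
              rw [if_neg (fun hh : ((s, y) : V × V) = (u, s) => hus (Prod.ext_iff.1 hh).1.symm)]
              have hle : (Finset.univ.filter (fun i => ((s, y) : V × V) ∈ G₁ i)).card ≤
                  (Finset.univ.filter (fun i => ((s, y) : V × V) ∈ F i)).card + 1 :=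
                card_filter_le_succ i₀ (fun j hj hQ => ((hoff j hj) _).1 hQ)
              have h4 : (Finset.univ.filter (fun i => ((s, y) : V × V) ∈ F i)).card
                  ≤ splitW w u s y s y := hcap (s, y)
              have h5 := splitW_sy (w := w) hus hwy
              have h6 : (Finset.univ.filter (fun i => ((s, y) : V × V) ∈ G₁ i)).card + 0
                  ≤ w s y := by omega
              simpa using h6
            · have hle : (Finset.univ.filter (fun i => e ∈ G₁ i)).card ≤
                  (Finset.univ.filter (fun i => e ∈ F i)).card := by
                refine card_filter_mono ?_
                intro j hQ
                by_cases hj : j = i₀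
                · subst hj
                  rw [hG₁, Function.update_self] at hQ
                  rcases hmemF' e hQ with rfl | ⟨heF, _⟩
                  · exact absurd rfl h2
                  · exact heF
                · exact ((hoff j hj) _).1 hQ
              by_cases h1 : e = ((u, s) : V × V)
              · subst h1
                rw [if_pos rfl]
                have h4 : (Finset.univ.filter (fun i => ((u, s) : V × V) ∈ F i)).card
                    ≤ splitW w u s y u s := hcap (u, s)
                have h5 := splitW_us (w := w) (y := y) hws
                have h6 : (Finset.univ.filter (fun i => ((u, s) : V × V) ∈ G₁ i)).card + 1
                    ≤ w u s := by omega
                exact h6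
              · rw [if_neg h1, add_zero]
                have h4 : (Finset.univ.filter (fun i => e ∈ F i)).card
                    ≤ splitW w u s y e.1 e.2 := hcap e
                rw [splitW_off e.1 e.2 (ne_pair h1) (ne_pair h2) (ne_pair h3)] at h4
                omega
      · -- v2'' : no access to s without (u,y)
        obtain ⟨z, hz⟩ := exists_in_arc r (harb i₀) hsin hsr
        have hzs : z ≠ s := hloop i₀ (z, s) hz
        have h_first : Reach r (Fo.erase (u, y)) u := by
          refine Relation.ReflTransGen.mono ?_ _ _ (reach_first r (harb i₀ u (mem_arbVerts_fst r hmem)))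
          intro a c hac
          exact Finset.mem_erase.2 ⟨fun he => hac.2 (Prod.ext_iff.1 he).1, hac.1⟩
        have hsy_ne : ∀ b : V, ((b, s) : V × V) ≠ (u, y) :=
          fun b hh => hys (Prod.ext_iff.1 hh).2.symm
        have hzu : z ≠ u := by
          rintro rfl
          exact hv2 (h_first.tail (Finset.mem_erase.2 ⟨hsy_ne z, hz⟩))
        have hcore : Reach r ((Fo.erase (u, y)).erase (z, s)) u := by
          rcases reach_avoid r (z, s) h_first with h | h
          · exact h
          · exact absurd (((reach_mono r (Finset.erase_subset _ _) h).tail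
              (Finset.mem_erase.2 ⟨hsy_ne z, hz⟩))) hv2
        set F' := insert ((u, s) : V × V) (insert ((s, y) : V × V)
          ((Fo.erase (u, y)).erase (z, s))) with hF'
        have hmem_us : ((u, s) : V × V) ∈ F' := Finset.mem_insert_self _ _
        have hmem_sy : ((s, y) : V × V) ∈ F' :=
          Finset.mem_insert_of_mem (Finset.mem_insert_self _ _)
        have hsub : (Fo.erase (u, y)).erase (z, s) ⊆ F' := fun e he =>
          Finset.mem_insert_of_mem (Finset.mem_insert_of_mem he)
        have hmemF' : ∀ e ∈ F', e = ((u, s) : V × V) ∨ e = ((s, y) : V × V)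
            ∨ (e ∈ Fo ∧ e ≠ (u, y) ∧ e ≠ (z, s)) := by
          intro e he
          rcases Finset.mem_insert.1 he with rfl | he2
          · exact Or.inl rfl
          rcases Finset.mem_insert.1 he2 with rfl | he3
          · exact Or.inr (Or.inl rfl)
          · have g1 := Finset.mem_erase.1 he3
            have g2 := Finset.mem_erase.1 g1.2
            exact Or.inr (Or.inr ⟨g2.2, g2.1, g1.1⟩)
        have hnot_uy : ((u, y) : V × V) ∉ F' := by
          intro h
          rcases hmemF' _ h with h | h | h
          · exact hys (Prod.ext_iff.1 h).2
          · exact hus (Prod.ext_iff.1 h).1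
          · exact h.2.1 rfl
        have hnot_zs : ((z, s) : V × V) ∉ F' := by
          intro h
          rcases hmemF' _ h with h | h | h
          · exact hzu (Prod.ext_iff.1 h).1
          · exact hzs (Prod.ext_iff.1 h).1
          · exact h.2.2 rfl
        have hru : Reach r F' u := reach_mono r hsub hcore
        have hrs : Reach r F' s := hru.tail hmem_us
        have H : ∀ a b : V, (a, b) ∈ Fo → Reach r F' a → Reach r F' b := by
          intro a b hab hra
          by_cases h : (a, b) = ((u, y) : V × V)
          · injection h with ha hb
            subst ha; subst hb
            exact hrs.tail hmem_sy
          · by_cases h2 : (a, b) = ((z, s) : V × V)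
            · injection h2 with ha hb
              subst ha; subst hb
              exact hrs
            · exact hra.tail (hsub (Finset.mem_erase.2 ⟨h2, Finset.mem_erase.2 ⟨h, hab⟩⟩))
        have harb' : IsArborescence r F' := by
          refine arb_transfer r (harb i₀) H ?_
          intro v hv
          rcases (mem_arbVerts_iff r).1 hv with hvr2 | ⟨e, he, hor⟩
          · subst hvr2; exact Or.inr Relation.ReflTransGen.refl
          rcases hmemF' e he with rfl | rfl | ⟨heF, _, _⟩
          · rcases hor with rfl | rfl
            · exact Or.inl (mem_arbVerts_fst r hmem)
            · exact Or.inr hrs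
          · rcases hor with rfl | rfl
            · exact Or.inr hrs
            · exact Or.inl (mem_arbVerts_snd r hmem)
          · rcases hor with rfl | rfl
            · exact Or.inl (mem_arbVerts_fst r heF)
            · exact Or.inl (mem_arbVerts_snd r heF)
        have hloop' : ∀ e ∈ F', e.1 ≠ e.2 := by
          intro e he
          rcases hmemF' e he with rfl | rfl | ⟨heF, _, _⟩
          · exact hus
          · exact fun hh => hys hh.symm
          · exact hloop i₀ e heF
        have hy_in : y ∈ arbVerts r F' := mem_arbVerts_snd r hmem_sy
        have hu_in : u ∈ arbVerts r F' := mem_arbVerts_fst r hmem_us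
        have hs_in : s ∈ arbVerts r F' := mem_arbVerts_snd r hmem_us
        have hz_in : z ∈ arbVerts r F' := by
          by_cases hzy : z = y
          · rw [hzy]; exact hy_in
          · by_cases hzr : z = r
            · rw [hzr]; exact mem_arbVerts_root _ F'
            · obtain ⟨p, hp⟩ := exists_in_arc r (harb i₀) (mem_arbVerts_fst r hz) hzr
              have hpne1 : ((p, z) : V × V) ≠ (u, y) := fun hh => hzy (Prod.ext_iff.1 hh).2
              have hpne2 : ((p, z) : V × V) ≠ (z, s) := fun hh => hzs (Prod.ext_iff.1 hh).2
              exact mem_arbVerts_snd r (hsub (Finset.mem_erase.2 ⟨hpne2,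
                Finset.mem_erase.2 ⟨hpne1, hp⟩⟩))
        have hvertsup : ∀ v ∈ arbVerts r Fo, v ∈ arbVerts r F' := by
          intro v hv
          rcases (mem_arbVerts_iff r).1 hv with hvr2 | ⟨e, he, hor⟩
          · subst hvr2; exact mem_arbVerts_root _ F'
          by_cases he1 : e = ((u, y) : V × V)
          · subst he1
            rcases hor with h1 | h1
            · rw [h1]; exact hu_in
            · rw [h1]; exact hy_in
          · by_cases he2 : e = ((z, s) : V × V)
            · subst he2
              rcases hor with h1 | h1
              · rw [h1]; exact hz_in
              · rw [h1]; exact hs_in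
            · have hin : e ∈ F' := hsub (Finset.mem_erase.2 ⟨he2, Finset.mem_erase.2 ⟨he1, he⟩⟩)
              rcases hor with h1 | h1
              · rw [h1]; exact mem_arbVerts_fst r hin
              · rw [h1]; exact mem_arbVerts_snd r hin
        have hsv' : s ∈ arbVerts r F' := mem_arbVerts_fst r hmem_sy
        have hwzs : 1 ≤ w z s := by
          have hpos : 0 < (Finset.univ.filter (fun i => ((z, s) : V × V) ∈ F i)).card :=
            Finset.card_pos.2 ⟨i₀, Finset.mem_filter.2 ⟨Finset.mem_univ _, hz⟩⟩
          have h4 : (Finset.univ.filter (fun i => ((z, s) : V × V) ∈ F i)).card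
              ≤ splitW w u s y z s := hcap (z, s)
          rw [splitW_off z s (fun hh => hzu hh.1) (fun hh => hzs hh.1)
            (fun hh => hys hh.2.symm)] at h4
          omega
        set G₁ := Function.update F i₀ F' with hG₁
        have hoff : ∀ j, j ≠ i₀ → (∀ e : V × V, (e ∈ G₁ j ↔ e ∈ F j)) := by
          intro j hj e
          rw [hG₁, Function.update_of_ne hj]
        have hcovmono : ∀ v : V,
            (Finset.univ.filter (fun i => v ∈ arbVerts r (F i))).card ≤
            (Finset.univ.filter (fun i => v ∈ arbVerts r (G₁ i))).card := by
          intro v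
          refine card_filter_mono ?_
          intro j hj
          by_cases hji : j = i₀
          · subst hji
            rw [hG₁, Function.update_self]
            exact hvertsup v hj
          · rw [hG₁, Function.update_of_ne hji]; exact hj
        refine assemble G₁ z hzs
          (fun hzr => le_trans (hpredcov z hzr hzs hwzs) (hcovmono z)) ?_ ?_ ?_ hcovmono
          (le_trans hm1 (by have := hcovmono s; omega))
        · intro i
          by_cases hi : i = i₀
          · subst hi; rw [hG₁, Function.update_self]; exact harb'
          · rw [hG₁, Function.update_of_ne hi]; exact harb i
        · intro i e he
          by_cases hi : i = i₀
          · subst hi; rw [hG₁, Function.update_self] at he; exact hloop' e he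
          · rw [hG₁, Function.update_of_ne hi] at he; exact hloop i e he
        · intro e
          by_cases hzse : e = ((z, s) : V × V)
          · subst hzse
            rw [if_pos rfl]
            have heq : (Finset.univ.filter (fun i => ((z, s) : V × V) ∈ F i)).card
                = (Finset.univ.filter (fun i => ((z, s) : V × V) ∈ G₁ i)).card + 1 := by
              refine card_filter_update_false hz ?_ (fun j hj => ((hoff j hj) _).symm)
              rw [hG₁, Function.update_self]
              exact hnot_zs
            have h4 : (Finset.univ.filter (fun i => ((z, s) : V × V) ∈ F i)).card
                ≤ splitW w u s y z s := hcap (z, s)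
            rw [splitW_off z s (fun hh => hzu hh.1) (fun hh => hzs hh.1)
              (fun hh => hys hh.2.symm)] at h4
            have h6 : (Finset.univ.filter (fun i => ((z, s) : V × V) ∈ G₁ i)).card + 1
                ≤ w z s := by omega
            exact h6
          · rw [if_neg hzse, add_zero]
            by_cases h3 : e = ((u, y) : V × V)
            · subst h3
              have heq : (Finset.univ.filter (fun i => ((u, y) : V × V) ∈ F i)).card
                  = (Finset.univ.filter (fun i => ((u, y) : V × V) ∈ G₁ i)).card + 1 := by
                refine card_filter_update_false hmem ?_ (fun j hj => ((hoff j hj) _).symm)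
                rw [hG₁, Function.update_self]
                exact hnot_uy
              have h6 : (Finset.univ.filter (fun i => ((u, y) : V × V) ∈ G₁ i)).card
                  ≤ w u y := by omega
              exact h6
            · by_cases h1 : e = ((u, s) : V × V)
              · subst h1
                have hle : (Finset.univ.filter (fun i => ((u, s) : V × V) ∈ G₁ i)).card ≤
                    (Finset.univ.filter (fun i => ((u, s) : V × V) ∈ F i)).card + 1 :=
                  card_filter_le_succ i₀ (fun j hj hQ => ((hoff j hj) _).1 hQ)
                have h4 : (Finset.univ.filter (fun i => ((u, s) : V × V) ∈ F i)).card
                    ≤ splitW w u s y u s := hcap (u, s)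
                have h5 := splitW_us (w := w) (y := y) hws
                have h6 : (Finset.univ.filter (fun i => ((u, s) : V × V) ∈ G₁ i)).card
                    ≤ w u s := by omega
                exact h6
              · by_cases h2 : e = ((s, y) : V × V)
                · subst h2
                  have hle : (Finset.univ.filter (fun i => ((s, y) : V × V) ∈ G₁ i)).card ≤
                      (Finset.univ.filter (fun i => ((s, y) : V × V) ∈ F i)).card + 1 :=
                    card_filter_le_succ i₀ (fun j hj hQ => ((hoff j hj) _).1 hQ)
                  have h4 : (Finset.univ.filter (fun i => ((s, y) : V × V) ∈ F i)).card
                      ≤ splitW w u s y s y := hcap (s, y)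
                  have h5 := splitW_sy (w := w) hus hwy
                  have h6 : (Finset.univ.filter (fun i => ((s, y) : V × V) ∈ G₁ i)).card
                      ≤ w s y := by omega
                  exact h6
                · have hle : (Finset.univ.filter (fun i => e ∈ G₁ i)).card ≤
                      (Finset.univ.filter (fun i => e ∈ F i)).card := by
                    refine card_filter_mono ?_
                    intro j hQ
                    by_cases hj : j = i₀
                    · subst hj
                      rw [hG₁, Function.update_self] at hQ
                      rcases hmemF' e hQ with rfl | rfl | ⟨heF, _, _⟩
                      · exact absurd rfl h1
                      · exact absurd rfl h2
                      · exact heF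
                    · exact ((hoff j hj) _).1 hQ
                  have h4 : (Finset.univ.filter (fun i => e ∈ F i)).card
                      ≤ splitW w u s y e.1 e.2 := hcap e
                  rw [splitW_off e.1 e.2 (ne_pair h1) (ne_pair h2) (ne_pair h3)] at h4
                  omega
end Step
section MainEuler
variable {V : Type*} [Fintype V] [DecidableEq V]

theorem pack_eulerian (r : V) :
    ∀ (n : ℕ) (w : V → V → ℕ), (∑ p : V, ∑ q : V, w p q) = n → Eulerian w →
      ∀ K : ℕ, ∃ F : Fin K → Finset (V × V), GoodPack r w K F := by
  intro n
  induction n using Nat.strong_induction_on with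
  | _ n IH =>
    intro w hn hE K
    by_cases hact : ∃ s : V, s ≠ r ∧ 0 < ∑ a ∈ Finset.univ.erase s, w a s
    · have hne : (Finset.univ.filter
          (fun v => v ≠ r ∧ 0 < ∑ a ∈ Finset.univ.erase v, w a v)).Nonempty := by
        obtain ⟨s, hs⟩ := hact
        exact ⟨s, Finset.mem_filter.2 ⟨Finset.mem_univ s, hs⟩⟩
      obtain ⟨s, hsact, hsmin⟩ := Finset.exists_min_image _ (fun v => lambdaW w r v) hne
      rw [Finset.mem_filter] at hsact
      obtain ⟨-, hsr', hspos⟩ := hsact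
      have hu : ∃ u, u ≠ s ∧ 1 ≤ w u s := by
        by_contra hc
        push_neg at hc
        have hzero : ∑ a ∈ Finset.univ.erase s, w a s = 0 :=
          Finset.sum_eq_zero (fun a ha => by
            have := hc a (Finset.mem_erase.1 ha).1
            omega)
        omega
      obtain ⟨u, hus, hws⟩ := hu
      have hminpred : ∀ x : V, x ≠ r → x ≠ s → 1 ≤ w x s →
          lambdaW w r s ≤ lambdaW w r x := by
        intro x hxr hxs hwx
        refine hsmin x (Finset.mem_filter.2 ⟨Finset.mem_univ x, hxr, ?_⟩)
        have h1 := Finset.add_sum_erase Finset.univ (fun b => w x b) (Finset.mem_univ x)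
        have h2 := Finset.add_sum_erase Finset.univ (fun a => w a x) (Finset.mem_univ x)
        have h3 := hE x
        have h4 : w x s ≤ ∑ b ∈ Finset.univ.erase x, w x b :=
          Finset.single_le_sum (f := fun b => w x b) (fun _ _ => Nat.zero_le _)
            (Finset.mem_erase.2 ⟨Ne.symm hxs, Finset.mem_univ s⟩)
        omega
      obtain ⟨y, hys, hwy, hpres⟩ := jackson hE hsr' hus hws
      have hE1 := eulerian_splitW hE hus hys hws hwy
      have htot := total_splitW (w := w) hus hys hws hwy
      have hlt : (∑ p : V, ∑ q : V, splitW w u s y p q) < n := by omega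
      obtain ⟨F, hF⟩ := IH _ hlt (splitW w u s y) rfl hE1 K
      exact pack_step hE hsr' hus hys hws hwy hminpred hpres hF
    · push_neg at hact
      refine pack_base ?_ K
      intro v hvr
      have := hact v hvr
      omega
end MainEuler
section Final
variable {V : Type*} [Fintype V] [DecidableEq V]

def eulerExt (w : V → V → ℕ) (r : V) : V → V → ℕ := fun a b =>
  if b = r ∧ a ≠ r then w a b + ((∑ c : V, w c a) - (∑ c : V, w a c)) else w a b

lemma eulerExt_eulerian {w : V → V → ℕ} {r : V}
    (hdeg : ∀ u : V, u ≠ r → ∑ a : V, w u a ≤ ∑ a : V, w a u) :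
    Eulerian (eulerExt w r) := by
  have hrow : ∀ v : V, v ≠ r → (∑ b : V, eulerExt w r v b) = ∑ a : V, w a v := by
    intro v hv
    have hpt : ∀ b : V, eulerExt w r v b
        = w v b + (if b = r then ((∑ c : V, w c v) - (∑ c : V, w v c)) else 0) := by
      intro b
      unfold eulerExt
      by_cases hb : b = r
      · rw [if_pos ⟨hb, hv⟩, if_pos hb]
      · rw [if_neg (fun hh => hb hh.1), if_neg hb, add_zero]
    rw [Finset.sum_congr rfl (fun b _ => hpt b), Finset.sum_add_distrib,
      Finset.sum_ite_eq' Finset.univ r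
        (fun _ => ((∑ c : V, w c v) - (∑ c : V, w v c)))]
    simp only [Finset.mem_univ, if_pos]
    have := hdeg v hv
    omega
  have hcol : ∀ v : V, v ≠ r → (∑ a : V, eulerExt w r a v) = ∑ a : V, w a v := by
    intro v hv
    refine Finset.sum_congr rfl (fun a _ => ?_)
    unfold eulerExt
    rw [if_neg (fun hh => hv hh.1)]
  intro v
  by_cases hv : v = r
  · rw [hv]
    have h1 : ∑ p : V, (∑ q : V, eulerExt w r p q) = ∑ p : V, (∑ q : V, eulerExt w r q p) := by
      rw [Finset.sum_comm]
    have h2 := Finset.add_sum_erase Finset.univ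
      (fun p => ∑ q : V, eulerExt w r p q) (Finset.mem_univ r)
    have h3 := Finset.add_sum_erase Finset.univ
      (fun p => ∑ q : V, eulerExt w r q p) (Finset.mem_univ r)
    have h4 : ∑ p ∈ Finset.univ.erase r, (∑ q : V, eulerExt w r p q)
        = ∑ p ∈ Finset.univ.erase r, (∑ q : V, eulerExt w r q p) := by
      refine Finset.sum_congr rfl (fun p hp => ?_)
      have hpr := (Finset.mem_erase.1 hp).1
      rw [hrow p hpr, hcol p hpr]
    omega
  · rw [hrow v hv, hcol v hv]

lemma eulerExt_cut {w : V → V → ℕ} {r : V} {X : Finset V} (hr : r ∈ X) :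
    cutWeight (eulerExt w r) X = cutWeight w X := by
  unfold cutWeight
  refine Finset.sum_congr rfl (fun p _ => Finset.sum_congr rfl (fun q hq => ?_))
  have hqr : q ≠ r := fun hh => (Finset.mem_compl.1 hq) (hh ▸ hr)
  unfold eulerExt
  rw [if_neg (fun hh => hqr hh.1)]

lemma eulerExt_lambda {w : V → V → ℕ} {r v : V} (hv : v ≠ r) :
    lambdaW (eulerExt w r) r v = lambdaW w r v := by
  apply le_antisymm
  · obtain ⟨X, h1, h2, h3⟩ := lambdaW_exists w r hv
    rw [← h3, ← eulerExt_cut (w := w) h1]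
    exact lambdaW_le _ r h1 h2
  · obtain ⟨X, h1, h2, h3⟩ := lambdaW_exists (eulerExt w r) r hv
    rw [← h3, eulerExt_cut h1]
    exact lambdaW_le _ r h1 h2

lemma eulerExt_off {w : V → V → ℕ} {r : V} {a b : V} (hb : b ≠ r) :
    eulerExt w r a b = w a b := by
  unfold eulerExt
  rw [if_neg (fun hh => hb hh.1)]

end Final

theorem arborescence_packing'
    {V : Type*} [Fintype V] [DecidableEq V] (r : V) (w : V → V → ℕ)
    (hdeg : ∀ u : V, u ≠ r → ∑ a : V, w u a ≤ ∑ a : V, w a u)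
    (K : ℕ) :
    ∃ (q : ℕ) (F : Fin q → Finset (V × V)) (γ : Fin q → ℕ),
      (∀ i, IsArborescence r (F i)) ∧
      (∀ i, ∀ e ∈ F i, 0 < w e.1 e.2) ∧
      (∀ i, 0 < γ i) ∧
      (∑ i, γ i = K) ∧
      (∀ e : V × V, ∑ i ∈ Finset.univ.filter (fun i => e ∈ F i), γ i ≤ w e.1 e.2) ∧
      (∀ u : V, u ≠ r →
        min K (lambdaW w r u) ≤
          ∑ i ∈ Finset.univ.filter (fun i => u ∈ arbVerts r (F i)), γ i) := by
  classical
  obtain ⟨F, hF⟩ := pack_eulerian r (∑ p : V, ∑ q : V, eulerExt w r p q) (eulerExt w r) rfl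
    (eulerExt_eulerian hdeg) K
  obtain ⟨harb, hloop, hcap, hcov⟩ := hF
  set G : Fin K → Finset (V × V) := fun i => (F i).filter (fun e => e.2 ≠ r) with hG
  have hGsub : ∀ i, G i ⊆ F i := fun i => Finset.filter_subset _ _
  have harbG : ∀ i, IsArborescence r (G i) := by
    intro i
    refine arb_transfer r (harb i) ?_ ?_
    · intro a b hab hra
      by_cases hb : b = r
      · rw [hb]; exact Relation.ReflTransGen.refl
      · exact hra.tail (Finset.mem_filter.2 ⟨hab, hb⟩)
    · intro v hv
      exact Or.inl (arbVerts_subset (hGsub i) hv)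
  have hcovG : ∀ v : V, v ≠ r → ∀ i, v ∈ arbVerts r (F i) → v ∈ arbVerts r (G i) := by
    intro v hvr i hvi
    obtain ⟨p, hp⟩ := exists_in_arc r (harb i) hvi hvr
    exact mem_arbVerts_snd r (Finset.mem_filter.2 ⟨hp, hvr⟩)
  have hcapG : ∀ e : V × V, (Finset.univ.filter (fun j => e ∈ G j)).card ≤ w e.1 e.2 := by
    intro e
    by_cases her : e.2 = r
    · have hzero : (Finset.univ.filter (fun j => e ∈ G j)) = ∅ := by
        refine Finset.filter_eq_empty_iff.2 ?_
        intro j _ hj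
        exact (Finset.mem_filter.1 hj).2 her
      rw [hzero, Finset.card_empty]
      exact Nat.zero_le _
    · have h1 : (Finset.univ.filter (fun j => e ∈ G j)).card
          ≤ (Finset.univ.filter (fun j => e ∈ F j)).card :=
        card_filter_mono (fun j hj => hGsub j hj)
      have h2 := hcap e
      rw [eulerExt_off her] at h2
      omega
  refine ⟨K, G, fun _ => 1, harbG, ?_, fun _ => Nat.one_pos, ?_, ?_, ?_⟩
  · intro i e he
    have h1 : 0 < (Finset.univ.filter (fun j => e ∈ G j)).card :=
      Finset.card_pos.2 ⟨i, Finset.mem_filter.2 ⟨Finset.mem_univ i, he⟩⟩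
    have := hcapG e
    omega
  · simp
  · intro e
    rw [Finset.sum_const, smul_eq_mul, mul_one]
    exact hcapG e
  · intro uu huu
    rw [Finset.sum_const, smul_eq_mul, mul_one]
    have h1 := hcov uu huu
    rw [eulerExt_lambda huu] at h1
    have h2 : (Finset.univ.filter (fun i => uu ∈ arbVerts r (F i))).card
        ≤ (Finset.univ.filter (fun i => uu ∈ arbVerts r (G i))).card :=
      card_filter_mono (fun j => hcovG uu huu j)
    omega

/-- polynomial-time arborescence packing (existence form).
`w` are nonnegative integer arc weights on the digraph `D = (U ∪ {r}, A)` (arcs are pairs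
with `w > 0`); weighted in-degree ≥ weighted out-degree for every `u ≠ r`.  For any `K ≥ 0`
there are out-arborescences `F_1,…,F_q` rooted at `r`, subgraphs of `D`, and positive integer
weights `γ_1,…,γ_q` with `∑ γ_i = K`, `∑_{i : e ∈ F_i} γ_i ≤ w_e` for every arc `e`, and
`∑_{i : u ∈ F_i} γ_i ≥ min{K, λ_D(r,u)}` for every `u ∈ U`. -/
theorem arborescence_packing
    {V : Type*} [Fintype V] [DecidableEq V] (r : V) (w : V → V → ℕ)
    (hdeg : ∀ u : V, u ≠ r → ∑ a : V, w u a ≤ ∑ a : V, w a u)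
    (K : ℕ) :
    ∃ (q : ℕ) (F : Fin q → Finset (V × V)) (γ : Fin q → ℕ),
      (∀ i, IsArborescence r (F i)) ∧
      (∀ i, ∀ e ∈ F i, 0 < w e.1 e.2) ∧
      (∀ i, 0 < γ i) ∧
      (∑ i, γ i = K) ∧
      (∀ e : V × V, ∑ i ∈ univ.filter (fun i => e ∈ F i), γ i ≤ w e.1 e.2) ∧
      (∀ u : V, u ≠ r →
        min K (lambdaW w r u) ≤ ∑ i ∈ univ.filter (fun i => u ∈ arbVerts r (F i)), γ i) := by
  exact arborescence_packing' r w hdeg K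
end

section
/- Let G = (V,E) be a complete undirected graph with root r ∈ V and metric edge costs {c_e}, and let λ ≥ 0. Then there exists a rooted tree T_λ (a subtree of G containing r) such that for every finite collection 𝒞 of r-rooted paths (possibly non-simple, i.e., walks starting at r), c(T_λ) + λ·|V ∖ V(T_λ)| ≤ ∑_{P∈𝒞} c(P) + λ·|V ∖ ⋃_{P∈𝒞} V(P)|. -/
open Finset

/-- `c` is a (semi-)metric cost function. -/
def IsMetricCost {V : Type*} (c : V → V → ℝ) : Prop :=
  (∀ u, c u u = 0) ∧ (∀ u v, 0 ≤ c u v) ∧ (∀ u v, c u v = c v u) ∧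
    ∀ u v x, c u x ≤ c u v + c v x

/-- Cost of a walk (a list of vertices): sum of the costs of consecutive edges,
counted with multiplicity. -/
def walkCost {V : Type*} (c : V → V → ℝ) : List V → ℝ
  | [] => 0
  | [_] => 0
  | a :: b :: l => c a b + walkCost c (b :: l)

/-- A rooted tree: a tree in the complete graph on `V` containing the root `r`. -/
structure RTree (V : Type*) (r : V) where
  verts : Finset V
  root_mem : r ∈ verts
  parent : V → V
  parent_mem : ∀ v ∈ verts, parent v ∈ verts
  reaches : ∀ v ∈ verts, ∃ m : ℕ, parent^[m] v = r

/-- Total edge cost of a rooted tree. -/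
noncomputable def treeCost {V : Type*} [DecidableEq V] {r : V}
    (c : V → V → ℝ) (T : RTree V r) : ℝ :=
  ∑ v ∈ T.verts.erase r, c (T.parent v) v

/-- The union of the vertex sets of a collection of walks. -/
def unionVerts {V : Type*} [DecidableEq V] (𝒞 : List (List V)) : Finset V :=
  𝒞.foldr (fun P s => P.toFinset ∪ s) ∅

section aux
variable {V : Type*} [DecidableEq V] {r : V}

lemma walkCost_nonneg {c : V → V → ℝ} (hc : ∀ u v, 0 ≤ c u v) :
    ∀ l : List V, 0 ≤ walkCost c l
  | [] => le_refl 0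
  | [_] => le_refl 0
  | a :: b :: l => by
      have := walkCost_nonneg hc (b :: l)
      simp only [walkCost]
      linarith [hc a b]

def trivTree (r : V) : RTree V r where
  verts := {r}
  root_mem := mem_singleton_self r
  parent := fun _ => r
  parent_mem := fun _ _ => mem_singleton_self r
  reaches := fun _ _ => ⟨1, rfl⟩

lemma trivTree_cost (c : V → V → ℝ) : treeCost c (trivTree r) = 0 := by
  simp [treeCost, trivTree]

lemma iter_agree (T : RTree V r) (a b : V) (hb : b ∉ T.verts) :
    ∀ (m : ℕ) (v : V), v ∈ T.verts →
      (fun v => if v = b then a else T.parent v)^[m] v = T.parent^[m] v := by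
  intro m
  induction m with
  | zero => intro v _; rfl
  | succ m ih =>
      intro v hv
      rw [Function.iterate_succ_apply, Function.iterate_succ_apply]
      have hvb : v ≠ b := fun h => hb (h ▸ hv)
      simp only [if_neg hvb]
      exact ih _ (T.parent_mem v hv)

def addV (T : RTree V r) (a b : V) (ha : a ∈ T.verts) (hb : b ∉ T.verts) : RTree V r where
  verts := insert b T.verts
  root_mem := mem_insert_of_mem T.root_mem
  parent := fun v => if v = b then a else T.parent v
  parent_mem := by
    intro v hv
    by_cases h : v = b
    · simp [h, mem_insert_of_mem ha]
    · simp only [if_neg h]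
      rcases mem_insert.1 hv with h' | h'
      · exact absurd h' h
      · exact mem_insert_of_mem (T.parent_mem v h')
  reaches := by
    intro v hv
    rcases mem_insert.1 hv with h | h
    · obtain ⟨m, hm⟩ := T.reaches a ha
      refine ⟨m + 1, ?_⟩
      rw [Function.iterate_succ_apply]
      subst h
      rw [if_pos rfl]
      rw [iter_agree T a v hb m a ha]
      exact hm
    · obtain ⟨m, hm⟩ := T.reaches v h
      exact ⟨m, by rw [iter_agree T a b hb m v h]; exact hm⟩

lemma addV_cost (c : V → V → ℝ) (T : RTree V r) (a b : V) (ha : a ∈ T.verts)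
    (hb : b ∉ T.verts) :
    treeCost c (addV T a b ha hb) = c a b + treeCost c T := by
  have hbr : b ≠ r := fun h => hb (h ▸ T.root_mem)
  have h1 : (insert b T.verts).erase r = insert b (T.verts.erase r) := by
    rw [Finset.erase_insert_of_ne hbr]
  have hb' : b ∉ T.verts.erase r := fun h => hb (mem_of_mem_erase h)
  simp only [treeCost, addV, h1, Finset.sum_insert hb', if_pos rfl]
  congr 1
  refine Finset.sum_congr rfl fun v hv => ?_
  have : v ≠ b := fun h => hb' (h ▸ hv)
  simp [this]

lemma extend (c : V → V → ℝ) (hc : ∀ u v, 0 ≤ c u v) :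
    ∀ (l : List V) (T : RTree V r), (∀ x ∈ l.head?, x ∈ T.verts) →
      ∃ T' : RTree V r, T.verts ⊆ T'.verts ∧ l.toFinset ⊆ T'.verts ∧
        treeCost c T' ≤ treeCost c T + walkCost c l
  | [], T, _ => ⟨T, le_refl _, by simp, by simp [walkCost]⟩
  | [a], T, h => by
      refine ⟨T, le_refl _, ?_, by simp [walkCost]⟩
      simp only [List.toFinset_cons, List.toFinset_nil, LawfulSingleton.insert_empty_eq]
      exact singleton_subset_iff.2 (h a rfl)
  | a :: b :: l, T, h => by
      have ha : a ∈ T.verts := h a rfl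
      by_cases hb : b ∈ T.verts
      · obtain ⟨T', h1, h2, h3⟩ := extend c hc (b :: l) T (by simpa using hb)
        refine ⟨T', h1, ?_, ?_⟩
        · intro x hx
          rcases List.mem_cons.1 (List.mem_toFinset.1 hx) with h' | h'
          · exact h' ▸ h1 ha
          · exact h2 (List.mem_toFinset.2 h')
        · simp only [walkCost]
          linarith [hc a b]
      · have T1 := addV T a b ha hb
        obtain ⟨T', h1, h2, h3⟩ := extend c hc (b :: l) (addV T a b ha hb)
          (by intro x hx; simp at hx; subst hx; exact mem_insert_self b T.verts)
        refine ⟨T', fun x hx => h1 (mem_insert_of_mem hx), ?_, ?_⟩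
        · intro x hx
          rcases List.mem_cons.1 (List.mem_toFinset.1 hx) with h' | h'
          · exact h' ▸ h1 (mem_insert_of_mem ha)
          · exact h2 (List.mem_toFinset.2 h')
        · rw [addV_cost c T a b ha hb] at h3
          simp only [walkCost]
          linarith



lemma extendAll (c : V → V → ℝ) (hc : ∀ u v, 0 ≤ c u v) :
    ∀ (𝒞 : List (List V)) (T : RTree V r), (∀ P ∈ 𝒞, P.head? = some r) →
      ∃ T' : RTree V r, T.verts ⊆ T'.verts ∧ unionVerts 𝒞 ⊆ T'.verts ∧
        treeCost c T' ≤ treeCost c T + (𝒞.map (walkCost c)).sum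
  | [], T, _ => ⟨T, le_refl _, by simp [unionVerts], by simp⟩
  | P :: 𝒞, T, h => by
      have hP := h P List.mem_cons_self
      obtain ⟨T1, h1, h2, h3⟩ := extend c hc P T
        (by intro x hx; rw [hP] at hx; simp only [Option.mem_some_iff] at hx
            exact hx ▸ T.root_mem)
      obtain ⟨T', g1, g2, g3⟩ := extendAll c hc 𝒞 T1
        (fun Q hQ => h Q (List.mem_cons_of_mem _ hQ))
      refine ⟨T', h1.trans g1, ?_, ?_⟩
      · have heq : unionVerts (P :: 𝒞) = P.toFinset ∪ unionVerts 𝒞 := rfl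
        rw [heq]
        exact union_subset (h2.trans g1) g2
      · simp only [List.map_cons, List.sum_cons]
        linarith

lemma rtree_finite [Fintype V] : Finite (RTree V r) := by
  classical
  have : Function.Injective (fun T : RTree V r => (T.verts, T.parent)) := by
    rintro ⟨v1, _, p1, _, _⟩ ⟨v2, _, p2, _, _⟩ h
    simp only [Prod.mk.injEq] at h
    obtain ⟨h1, h2⟩ := h
    subst h1; subst h2; rfl
  exact Finite.of_injective _ this

end aux

/-- there is a rooted tree `T_λ` whose prize-collecting objective
(with uniform penalty `λ`) is at most that of any finite collection of
(possibly non-simple) `r`-rooted paths. -/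
theorem pc_tree_vs_path_collections
    {V : Type*} [Fintype V] [DecidableEq V] (r : V)
    (c : V → V → ℝ) (hc : IsMetricCost c)
    (lam : ℝ) (hlam : 0 ≤ lam) :
    ∃ T : RTree V r,
      ∀ 𝒞 : List (List V), (∀ P ∈ 𝒞, P.head? = some r) →
        treeCost c T + lam * ((univ \ T.verts).card : ℝ) ≤
          (𝒞.map (walkCost c)).sum + lam * ((univ \ unionVerts 𝒞).card : ℝ) := by
  obtain ⟨hc0, hcn, hcs, hct⟩ := hc
  have : Finite (RTree V r) := rtree_finite
  have : Nonempty (RTree V r) := ⟨trivTree r⟩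
  obtain ⟨T, hT⟩ := Finite.exists_min
    (fun T : RTree V r => treeCost c T + lam * ((univ \ T.verts).card : ℝ))
  refine ⟨T, fun 𝒞 h𝒞 => ?_⟩
  obtain ⟨T', _, h2, h3⟩ := extendAll c hcn 𝒞 (trivTree r) h𝒞
  have key := hT T'
  have hcost : treeCost c T' ≤ (𝒞.map (walkCost c)).sum := by
    rw [trivTree_cost] at h3; linarith
  have hcard : ((univ \ T'.verts).card : ℝ) ≤ ((univ \ unionVerts 𝒞).card : ℝ) := by
    exact_mod_cast card_le_card (sdiff_subset_sdiff (le_refl _) h2)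
  have hmul := mul_le_mul_of_nonneg_left hcard hlam
  linarith
end

section
/- For every integer k ≥ 1, every real κ ≥ 1, and all reals y_1, …, y_k ∈ [0,1] with ∑_{i=1}^k y_i ≤ 1, it holds that ∏_{i=1}^k (1 − y_i/κ) ≤ e^{−1/κ} + (1 − e^{−1/κ})·(1 − ∑_{i=1}^k y_i). -/
/-- the key product estimate in the analysis of the rounding algorithm
for multi-depot k-MLP: for `k ≥ 1`, `κ ≥ 1` and `y_1,…,y_k ∈ [0,1]` with `∑ y_i ≤ 1`,
`∏_i (1 − y_i/κ) ≤ e^{−1/κ} + (1 − e^{−1/κ})·(1 − ∑_i y_i)`. -/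
theorem product_coverage_bound
    (k : ℕ) (hk : 1 ≤ k) (κ : ℝ) (hκ : 1 ≤ κ)
    (y : Fin k → ℝ) (hy : ∀ i, y i ∈ Set.Icc (0 : ℝ) 1)
    (hsum : ∑ i, y i ≤ 1) :
    ∏ i, (1 - y i / κ) ≤
      Real.exp (-1 / κ) + (1 - Real.exp (-1 / κ)) * (1 - ∑ i, y i) := by
  have hκ0 : (0 : ℝ) < κ := lt_of_lt_of_le one_pos hκ
  set s := ∑ i, y i with hs
  have hs0 : 0 ≤ s := Finset.sum_nonneg fun i _ => (hy i).1
  -- Step 1: product ≤ exp (-s/κ)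
  have h1 : ∏ i, (1 - y i / κ) ≤ Real.exp (-s / κ) := by
    have : ∏ i, (1 - y i / κ) ≤ ∏ i, Real.exp (-(y i / κ)) := by
      apply Finset.prod_le_prod
      · intro i _
        have : y i / κ ≤ 1 := (div_le_one hκ0).2 (le_trans (hy i).2 hκ)
        linarith
      · intro i _
        have := Real.add_one_le_exp (-(y i / κ))
        linarith
    calc ∏ i, (1 - y i / κ) ≤ ∏ i, Real.exp (-(y i / κ)) := this
      _ = Real.exp (∑ i, -(y i / κ)) := (Real.exp_sum _ _).symm
      _ = Real.exp (-s / κ) := by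
          congr 1
          rw [Finset.sum_neg_distrib, hs, neg_div, Finset.sum_div]
  -- Step 2: convexity of exp
  have h2 : Real.exp (-s / κ) ≤ (1 - s) * Real.exp 0 + s * Real.exp (-1 / κ) := by
    have hc := convexOn_exp.2 (Set.mem_univ (0 : ℝ)) (Set.mem_univ (-1 / κ))
      (by linarith : (0:ℝ) ≤ 1 - s) hs0 (by ring)
    have heq : (1 - s) • (0:ℝ) + s • (-1 / κ) = -s / κ := by
      simp [smul_eq_mul]; ring
    rw [heq] at hc
    simpa [smul_eq_mul] using hc
  rw [Real.exp_zero] at h2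
  nlinarith [h1, h2]
end

section
/- Let c > 1 and q ≥ 1 be reals. For h ∈ [1,c), define σ_q(h) := min{ h·c^j : j ∈ ℤ≥0, h·c^j ≥ q }. Then ∫_0^1 σ_q(c^γ) dγ = ((c − 1)/ln c)·q; that is, if Γ is uniformly distributed on [0,1) and σ(q) is the smallest element of the geometric sequence (c^Γ·c^j)_{j≥0} that is at least q, then E[σ(q)] = ((c−1)/ln c)·q. -/
open Real MeasureTheory intervalIntegral

/-- `σ_q(h)`: the smallest element of the geometric sequence `(h·c^j)_{j ∈ ℤ≥0}`
that is at least `q`. -/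
noncomputable def sigmaGeom (c q h : ℝ) : ℝ :=
  sInf {x : ℝ | ∃ j : ℕ, x = h * c ^ j ∧ q ≤ x}

lemma sigmaGeom_eq (c q : ℝ) (hc : 1 < c) (hq : 1 ≤ q) {γ : ℝ} (hγ0 : 0 ≤ γ) (hγ1 : γ < 1) :
    sigmaGeom c q (c ^ γ) = q * c ^ (Int.fract (γ - Real.logb c q)) := by
  have hc0 : (0 : ℝ) < c := lt_trans one_pos hc
  have hq0 : (0 : ℝ) < q := lt_of_lt_of_le one_pos hq
  set t : ℝ := Real.logb c q with ht
  have hct : c ^ t = q := Real.rpow_logb hc0 (ne_of_gt hc) hq0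
  have ht0 : 0 ≤ t := Real.logb_nonneg hc hq
  set j₀ : ℤ := ⌈t - γ⌉ with hj₀
  have hj₀nn : 0 ≤ j₀ := by
    have : (-1 : ℤ) < j₀ := Int.lt_ceil.mpr (by push_cast; linarith)
    omega
  set n : ℕ := j₀.toNat with hn
  have hnj : (n : ℤ) = j₀ := Int.toNat_of_nonneg hj₀nn
  have hnr : (n : ℝ) = (j₀ : ℝ) := by exact_mod_cast hnj
  -- key: for any natural j, c^γ * c^j = c^(γ + j)
  have hpow : ∀ j : ℕ, c ^ γ * c ^ j = c ^ (γ + (j : ℝ)) := by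
    intro j
    rw [Real.rpow_add hc0, Real.rpow_natCast]
  have hle : ∀ x y : ℝ, c ^ x ≤ c ^ y ↔ x ≤ y := fun x y =>
    Real.rpow_le_rpow_left_iff hc
  have hmem : c ^ γ * c ^ n ∈ {x : ℝ | ∃ j : ℕ, x = c ^ γ * c ^ j ∧ q ≤ x} := by
    refine ⟨n, rfl, ?_⟩
    rw [hpow n, ← hct, hle]
    have := Int.le_ceil (t - γ)
    rw [← hj₀, ← hnj] at this
    push_cast at this
    linarith
  have hlb : ∀ x ∈ {x : ℝ | ∃ j : ℕ, x = c ^ γ * c ^ j ∧ q ≤ x}, c ^ γ * c ^ n ≤ x := by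
    rintro x ⟨j, rfl, hqx⟩
    rw [hpow n, hpow j, hle]
    have : t ≤ γ + (j : ℝ) := by
      rw [← hle, hct]; rwa [hpow j] at hqx
    have hjj : j₀ ≤ (j : ℤ) := Int.ceil_le.mpr (by push_cast; linarith)
    have : (n : ℝ) ≤ (j : ℝ) := by
      rw [hnr]; exact_mod_cast hjj
    linarith
  have hinf : sigmaGeom c q (c ^ γ) = c ^ γ * c ^ n :=
    IsLeast.csInf_eq ⟨hmem, hlb⟩
  rw [hinf, hpow n]
  have hfrac : γ + (n : ℝ) = t + Int.fract (γ - t) := by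
    rw [Int.fract]
    have hceil : j₀ = -⌊γ - t⌋ := by
      rw [hj₀, ← Int.ceil_neg]; ring_nf
    have : (n : ℝ) = -(⌊γ - t⌋ : ℝ) := by
      rw [hnr, hceil]; push_cast; ring
    rw [this]; ring
  rw [hfrac, Real.rpow_add hc0, hct]

/-- for reals `c > 1` and `q ≥ 1`,
`∫_0^1 σ_q(c^γ) dγ = ((c − 1)/ln c)·q`; i.e., if `Γ` is uniform on `[0,1)` and `σ(q)` is
the smallest element of the sequence `(c^Γ·c^j)_{j≥0}` that is at least `q`, then
`E[σ(q)] = ((c − 1)/ln c)·q`. -/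
theorem expected_geometric_rounding
    (c q : ℝ) (hc : 1 < c) (hq : 1 ≤ q) :
    ∫ γ in (0:ℝ)..1, sigmaGeom c q (c ^ γ) = ((c - 1) / Real.log c) * q := by
  have hc0 : (0 : ℝ) < c := lt_trans one_pos hc
  set t : ℝ := Real.logb c q with ht
  -- Step 1: replace integrand a.e.
  have h1 : ∫ γ in (0:ℝ)..1, sigmaGeom c q (c ^ γ)
      = ∫ γ in (0:ℝ)..1, q * c ^ (Int.fract (γ - t)) := by
    apply intervalIntegral.integral_congr_ae
    have hne : ∀ᵐ x : ℝ, x ≠ 1 := by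
      rw [MeasureTheory.ae_iff]
      simpa using measure_singleton (1 : ℝ)
    filter_upwards [hne] with x hx hmem
    rw [Set.uIoc_of_le (by norm_num : (0:ℝ) ≤ 1)] at hmem
    exact sigmaGeom_eq c q hc hq (le_of_lt hmem.1) (lt_of_le_of_ne hmem.2 hx)
  rw [h1, intervalIntegral.integral_const_mul]
  -- Step 2: shift variable
  have h2 : ∫ γ in (0:ℝ)..1, c ^ (Int.fract (γ - t))
      = ∫ u in (0 - t)..(1 - t), c ^ (Int.fract u) :=
    intervalIntegral.integral_comp_sub_right (fun u => c ^ (Int.fract u)) t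
  -- Step 3: periodicity
  have hper : Function.Periodic (fun u : ℝ => c ^ (Int.fract u)) 1 := by
    intro x; simp [Int.fract_add_intCast]
  have h3 : ∫ u in (0 - t)..(1 - t), c ^ (Int.fract u) = ∫ u in (0:ℝ)..1, c ^ (Int.fract u) := by
    have := hper.intervalIntegral_add_eq (0 - t) 0
    have heq : 0 - t + 1 = 1 - t := by ring
    rw [heq, zero_add] at this
    exact this
  -- Step 4: on (0,1), fract u = u
  have h4 : ∫ u in (0:ℝ)..1, c ^ (Int.fract u) = ∫ u in (0:ℝ)..1, c ^ u := by
    apply intervalIntegral.integral_congr_ae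
    have hne : ∀ᵐ x : ℝ, x ≠ 1 := by
      rw [MeasureTheory.ae_iff]
      simpa using measure_singleton (1 : ℝ)
    filter_upwards [hne] with x hx hmem
    rw [Set.uIoc_of_le (by norm_num : (0:ℝ) ≤ 1)] at hmem
    rw [Int.fract_eq_self.mpr ⟨le_of_lt hmem.1, lt_of_le_of_ne hmem.2 hx⟩]
  -- Step 5: compute ∫_0^1 c^u du
  have h5 : ∫ u in (0:ℝ)..1, c ^ u = (c - 1) / Real.log c := by
    have hlog : Real.log c ≠ 0 := ne_of_gt (Real.log_pos hc)
    have hderiv : ∀ u ∈ Set.uIcc (0:ℝ) 1,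
        HasDerivAt (fun x : ℝ => c ^ x / Real.log c) (c ^ u) u := by
      intro u _
      have := (Real.hasStrictDerivAt_const_rpow hc0 u).hasDerivAt
      have h := this.div_const (Real.log c)
      simpa [mul_div_assoc, mul_div_cancel_right₀ _ hlog] using h
    have hcont : Continuous fun u : ℝ => c ^ u := by
      have : (fun u : ℝ => c ^ u) = fun u => Real.exp (u * Real.log c) := by
        funext u; rw [Real.rpow_def_of_pos hc0, mul_comm]
      rw [this]; continuity
    rw [intervalIntegral.integral_eq_sub_of_hasDerivAt hderiv
      (hcont.intervalIntegrable 0 1)]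
    rw [Real.rpow_one, Real.rpow_zero]
    ring
  rw [h2, h3, h4, h5]
  ring
end
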